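/- arXiv:0709.1209 — 6 statements merged into one kernel-verified Lean document; each statement's English description precedes it below -/
import Mathlib

section
/- Let G be a finite group, χ an irreducible complex character of G, and K a normal subgroup of G such that the restriction of χ to K is irreducible. Then for every x ∈ G, |χ(x)|² = (χ(1)/|K|) · Σ_{k∈K} χ([x,k]), where [x,k] = x⁻¹k⁻¹xk. -/
open CategoryTheory

open Polynomial in
private lemma nilpotent_pow_sub {E : Type} [AddCommGroup E] [Module ℂ E]
    (a : Module.End ℂ E) (c : ℂ) (m : ℕ)
    (h : IsNilpotent (a - algebraMap ℂ (Module.End ℂ E) c)) :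
    IsNilpotent (a ^ m - algebraMap ℂ (Module.End ℂ E) (c ^ m)) := by
  obtain ⟨t, ht⟩ := sub_dvd_pow_sub_pow (X : ℂ[X]) (C c) m
  have h1 : a - algebraMap ℂ (Module.End ℂ E) c = aeval a (X - C c) := by simp
  have h2 : a ^ m - algebraMap ℂ (Module.End ℂ E) (c ^ m)
      = aeval a ((X : ℂ[X]) ^ m - (C c) ^ m) := by simp [map_pow]
  have hcomm : Commute (aeval a (X - C c)) (aeval a t) :=
    (Commute.all (X - C c) t).map (aeval a)
  rw [h2, ht, map_mul]
  rw [h1] at h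
  exact hcomm.isNilpotent_mul_right h

open Module LinearMap in
private lemma trace_star_key {E : Type} [AddCommGroup E] [Module ℂ E] [FiniteDimensional ℂ E]
    (f : Module.End ℂ E) {n : ℕ} (hn : 0 < n) (hf : f ^ n = 1) :
    star (trace ℂ E f) = trace ℂ E (f ^ (n - 1))  := by
  classical
  set N := f.maxGenEigenspace with hN
  have hind : iSupIndep N := f.independent_maxGenEigenspace
  have hsup : ⨆ μ, N μ = ⊤ := f.iSup_maxGenEigenspace_eq_top
  have hInt := DirectSum.isInternal_submodule_of_iSupIndep_of_iSup_eq_top hind hsup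
  have hfin : {μ | N μ ≠ ⊥}.Finite := WellFoundedGT.finite_ne_bot_of_iSupIndep hind
  have hmem : ∀ (m : ℕ) (μ : ℂ), Set.MapsTo (f ^ m) (N μ) (N μ) := fun m μ =>
    f.mapsTo_maxGenEigenspace_of_comm ((Commute.refl f).pow_right m) μ
  have key : ∀ (m : ℕ) (μ : ℂ), trace ℂ (N μ) ((f ^ m).restrict (hmem m μ)) =
      μ ^ m * (finrank ℂ (N μ) : ℂ) := by
    intro m μ
    have hmaps : Set.MapsTo f (N μ) (N μ) :=
      f.mapsTo_maxGenEigenspace_of_comm (Commute.refl f) μ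
    have hnil : IsNilpotent (f.restrict hmaps - algebraMap ℂ (Module.End ℂ (N μ)) μ) := by
      have h0 := f.isNilpotent_restrict_maxGenEigenspace_sub_algebraMap μ
      have heq : f.restrict hmaps - algebraMap ℂ (Module.End ℂ (N μ)) μ
          = (f - algebraMap ℂ (Module.End ℂ E) μ).restrict
            (Module.End.mapsTo_maxGenEigenspace_of_comm
              (Algebra.mul_sub_algebraMap_commutes f μ) μ) := by
        refine LinearMap.ext fun v => Subtype.ext ?_
        simp [LinearMap.restrict_apply, LinearMap.sub_apply, Module.algebraMap_end_apply]
        rfl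
      rw [heq]
      exact h0
    have hnilm := nilpotent_pow_sub (f.restrict hmaps) μ m hnil
    have hres : (f ^ m).restrict (hmem m μ) = (f.restrict hmaps) ^ m :=
      (Module.End.pow_restrict m hmaps).symm
    have htr0 : trace ℂ (N μ) ((f.restrict hmaps) ^ m
        - algebraMap ℂ (Module.End ℂ (N μ)) (μ ^ m)) = 0 :=
      (LinearMap.isNilpotent_trace_of_isNilpotent hnilm).eq_zero
    have halg : trace ℂ (N μ) (algebraMap ℂ (Module.End ℂ (N μ)) (μ ^ m))
        = μ ^ m * (finrank ℂ (N μ) : ℂ) := by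
      rw [Algebra.algebraMap_eq_smul_one, map_smul, trace_one, smul_eq_mul]
    rw [map_sub, sub_eq_zero] at htr0
    rw [hres, htr0, halg]
  have traces : ∀ m : ℕ, trace ℂ E (f ^ m)
      = ∑ μ ∈ hfin.toFinset, μ ^ m * (finrank ℂ (N μ) : ℂ) := by
    intro m
    rw [trace_eq_sum_trace_restrict' hInt hfin (hmem m)]
    exact Finset.sum_congr rfl fun μ _ => key m μ
  have hroot : ∀ μ ∈ hfin.toFinset, μ ^ n = 1 := by
    intro μ hμ
    have hne : N μ ≠ ⊥ := by simpa using (Set.Finite.mem_toFinset hfin).mp hμ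
    haveI : Nontrivial (N μ) := Submodule.nontrivial_iff_ne_bot.mpr hne
    have hd : (finrank ℂ (N μ) : ℂ) ≠ 0 :=
      Nat.cast_ne_zero.mpr (finrank_pos (R := ℂ) (M := N μ)).ne'
    have h1 : trace ℂ (N μ) ((f ^ n).restrict (hmem n μ)) = μ ^ n * (finrank ℂ (N μ) : ℂ) :=
      key n μ
    have h2 : (f ^ n).restrict (hmem n μ) = 1 := by
      refine LinearMap.ext fun v => Subtype.ext ?_
      simp [LinearMap.restrict_apply, hf]
    rw [h2, trace_one] at h1
    have h3 : μ ^ n * (finrank ℂ (N μ) : ℂ) = 1 * (finrank ℂ (N μ) : ℂ) := by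
      rw [one_mul]; exact h1.symm
    exact mul_right_cancel₀ hd h3
  have hstar : ∀ μ ∈ hfin.toFinset, star μ = μ ^ (n - 1) := by
    intro μ hμ
    have hμn := hroot μ hμ
    have hnorm : Complex.normSq μ = 1 := by
      have h1 : Complex.normSq μ ^ n = 1 := by rw [← map_pow, hμn, map_one]
      have h0 : 0 ≤ Complex.normSq μ := Complex.normSq_nonneg μ
      rcases lt_trichotomy (Complex.normSq μ) 1 with h | h | h
      · exact absurd h1 (pow_lt_one₀ h0 h hn.ne').ne
      · exact h
      · exact absurd h1 (one_lt_pow₀ h hn.ne').ne'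
    have hsm : star μ * μ = 1 := by
      rw [Complex.star_def, mul_comm, Complex.mul_conj, hnorm, Complex.ofReal_one]
    have hpm : μ ^ (n - 1) * μ = 1 := by
      rw [← pow_succ, Nat.sub_add_cancel hn, hμn]
    rw [eq_inv_of_mul_eq_one_left hsm, eq_inv_of_mul_eq_one_left hpm]
  calc star (trace ℂ E f)
      = star (trace ℂ E (f ^ 1)) := by rw [pow_one]
    _ = ∑ μ ∈ hfin.toFinset, μ ^ (n - 1) * (finrank ℂ (N μ) : ℂ) := by
        rw [traces 1, star_sum]
        refine Finset.sum_congr rfl fun μ hμ => ?_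
        rw [star_mul', star_natCast, pow_one, hstar μ hμ]
    _ = trace ℂ E (f ^ (n - 1)) := (traces (n - 1)).symm

private lemma FDRep_char_inv {G : Type} [Group G] [Finite G] (V : FDRep ℂ G) (x : G) :
    V.character x⁻¹ = star (V.character x) := by
  have hn : 0 < orderOf x := orderOf_pos x
  have hf : (V.ρ x) ^ orderOf x = 1 := by
    rw [← map_pow, pow_orderOf_eq_one, map_one]
  have h1 : x⁻¹ = x ^ (orderOf x - 1) := by
    have h : x ^ (orderOf x - 1) * x = 1 := by
      rw [← pow_succ, Nat.sub_add_cancel hn, pow_orderOf_eq_one]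
    exact (eq_inv_of_mul_eq_one_left h).symm
  show LinearMap.trace ℂ V (V.ρ x⁻¹) = star (LinearMap.trace ℂ V (V.ρ x))
  rw [h1, map_pow]
  exact (trace_star_key (V.ρ x) hn hf).symm

theorem stmt0 {G : Type} [Group G] [Finite G] (V : FDRep ℂ G) [Simple V]
    (K : Subgroup G) [K.Normal]
    (hres : Simple (FDRep.of (V.ρ.comp K.subtype)))
    (x : G) :
    star (V.character x) * V.character x =
      (V.character 1 / (Nat.card K : ℂ)) *
        ∑ᶠ k ∈ (K : Set G), V.character (x⁻¹ * k⁻¹ * x * k) := by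
  classical
  haveI : Fintype K := Fintype.ofFinite _
  haveI : Fintype ((K : Set G) : Type) := Fintype.ofFinite _
  set S : V →ₗ[ℂ] V := ∑ k : K, V.ρ ((k : G)⁻¹ * x * (k : G)) with hSdef
  have hc : ∀ k₀ : K, V.ρ (k₀ : G) * S = S * V.ρ (k₀ : G) := by
    intro k₀
    rw [hSdef, Finset.mul_sum, Finset.sum_mul]
    refine (Fintype.sum_equiv (Equiv.mulRight k₀) _ _ fun j => ?_).symm
    rw [← map_mul, ← map_mul]
    congr 1
    push_cast [Equiv.coe_mulRight]
    group
  set W : FDRep ℂ K := FDRep.of (V.ρ.comp K.subtype) with hWdef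
  letI : Simple W := hres
  obtain ⟨c, hcsmul⟩ := endomorphism_simple_eq_smul_id ℂ (X := W)
    (⟨FGModuleCat.ofHom S, fun k₀ => by
      ext v; exact congrArg (fun f => f v) (hc k₀).symm⟩ : W ⟶ W)
  have hS : S = c • (LinearMap.id : V →ₗ[ℂ] V) := by
    ext v
    have h := congrArg (fun f : W ⟶ W => ConcreteCategory.hom (Action.Hom.hom f) v) hcsmul
    simp at h
    rw [← h]
    rfl
  have htr1 : LinearMap.trace ℂ V S = (Nat.card K : ℂ) * V.character x := by
    rw [hSdef, map_sum]
    have h : ∀ k : K, LinearMap.trace ℂ V (V.ρ ((k : G)⁻¹ * x * (k : G))) = V.character x := by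
      intro k
      have h' := FDRep.char_conj V x ((k : G)⁻¹)
      rw [inv_inv] at h'
      exact h'
    rw [Finset.sum_congr rfl fun k _ => h k]
    simp [Nat.card_eq_fintype_card, mul_comm]
  have htr2 : LinearMap.trace ℂ V S = c * V.character 1 := by
    rw [hS, map_smul, smul_eq_mul]
    congr 1
    show LinearMap.trace ℂ V LinearMap.id = V.character 1
    rw [LinearMap.trace_id, FDRep.char_one]
  have hsum : ∑ᶠ k ∈ (K : Set G), V.character (x⁻¹ * k⁻¹ * x * k)
      = c * V.character x⁻¹ := by
    rw [← finsum_set_coe_eq_finsum_mem, finsum_eq_sum_of_fintype]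
    have h1 : ∀ k : (K : Set G), V.character (x⁻¹ * (k : G)⁻¹ * x * (k : G))
        = LinearMap.trace ℂ V (V.ρ x⁻¹ * V.ρ ((k : G)⁻¹ * x * (k : G))) := by
      intro k
      rw [← map_mul]
      show LinearMap.trace ℂ V _ = _
      congr 2
      group
    rw [Finset.sum_congr rfl fun k _ => h1 k, ← map_sum, ← Finset.mul_sum]
    have h2 : ∑ k : (K : Set G), V.ρ ((k : G)⁻¹ * x * (k : G)) = S := by
      rw [hSdef]
      exact Fintype.sum_equiv (Equiv.subtypeEquivRight fun g => Iff.rfl) _ _ fun k => rfl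
    have h3 : V.ρ x⁻¹ * (c • (LinearMap.id : V →ₗ[ℂ] V)) = c • V.ρ x⁻¹ := by
      ext v
      simp
    rw [h2, hS, h3, map_smul, smul_eq_mul]
    rfl
  rw [hsum, FDRep_char_inv]
  have hK0 : (Nat.card K : ℂ) ≠ 0 := Nat.cast_ne_zero.mpr Nat.card_pos.ne'
  have hkey : (Nat.card K : ℂ) * V.character x = c * V.character 1 := by
    rw [← htr1, htr2]
  rw [div_mul_eq_mul_div, eq_div_iff hK0]
  linear_combination star (V.character x) * hkey
end

section
/- Let G be a finite p-solvable group and X a faithful simple G-module whose order is divisible by p (so X is a faithful simple 𝔽_pG-module). Then H¹(G,X) = 0 and H²(G,X) = 0. -/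
open CategoryTheory

/-- A finite group `G` is `p`-solvable: it has a normal series whose factors are
`p`-groups or `p'`-groups. -/
def IsPSolvable (p : ℕ) (G : Type*) [Group G] : Prop :=
  ∃ (n : ℕ) (s : Fin (n + 1) → Subgroup G),
    s 0 = ⊥ ∧ s (Fin.last n) = ⊤ ∧
    (∀ i : Fin n, s i.castSucc ≤ s i.succ) ∧
    (∀ i : Fin n, ((s i.castSucc).subgroupOf (s i.succ)).Normal) ∧
    (∀ i : Fin n, (∃ k, (s i.castSucc).relIndex (s i.succ) = p ^ k) ∨
      ¬ p ∣ (s i.castSucc).relIndex (s i.succ))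



/-- `GoodCard p true n` : `n` is a power of `p`; `GoodCard p false n` : `p ∤ n`. -/
def GoodCard (p : ℕ) (b : Bool) (n : ℕ) : Prop :=
  if b then ∃ k, n = p ^ k else ¬ p ∣ n

section Structural

variable {p : ℕ} [hp : Fact p.Prime]

lemma goodCard_one (b : Bool) : GoodCard p b 1 := by
  cases b with
  | false =>
    simp only [GoodCard, if_false, Nat.dvd_one]
    exact hp.out.ne_one
  | true => exact ⟨0, rfl⟩

lemma goodCard_dvd {b : Bool} {n m : ℕ} (h : GoodCard p b n) (hd : m ∣ n) : GoodCard p b m := by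
  cases b with
  | false => exact fun hpm => h (hpm.trans hd)
  | true =>
    obtain ⟨k, rfl⟩ := h
    obtain ⟨j, _, rfl⟩ := (Nat.dvd_prime_pow hp.out).mp hd
    exact ⟨j, rfl⟩

lemma goodCard_mul {b : Bool} {n m : ℕ} (h1 : GoodCard p b n) (h2 : GoodCard p b m) :
    GoodCard p b (n * m) := by
  cases b with
  | false => exact fun hd => ((Nat.Prime.dvd_mul hp.out).mp hd).elim h1 h2
  | true =>
    obtain ⟨k, rfl⟩ := h1; obtain ⟨j, rfl⟩ := h2
    exact ⟨k + j, (pow_add p k j).symm⟩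

variable {G : Type*} [Group G]

lemma card_sup_dvd [Finite G] (H N : Subgroup G) [N.Normal] :
    Nat.card ↥(H ⊔ N) ∣ Nat.card H * Nat.card N := by
  have h1 : Nat.card ↥(H ⊔ N) =
      Nat.card (↥(H ⊔ N) ⧸ N.subgroupOf (H ⊔ N)) * Nat.card (N.subgroupOf (H ⊔ N)) :=
    Subgroup.card_eq_card_quotient_mul_card_subgroup _
  have h2 : Nat.card (↥(H ⊔ N) ⧸ N.subgroupOf (H ⊔ N)) = Nat.card (↥H ⧸ N.subgroupOf H) :=
    Nat.card_congr (QuotientGroup.quotientInfEquivProdNormalQuotient H N).toEquiv.symm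
  have h3 : Nat.card (N.subgroupOf (H ⊔ N)) = Nat.card N :=
    Nat.card_congr (Subgroup.subgroupOfEquivOfLe le_sup_right).toEquiv
  have h4 : Nat.card (↥H ⧸ N.subgroupOf H) ∣ Nat.card H :=
    ⟨Nat.card (N.subgroupOf H), Subgroup.card_eq_card_quotient_mul_card_subgroup _⟩
  rw [h1, h2, h3]
  exact mul_dvd_mul h4 dvd_rfl

/-- Existence of a greatest normal subgroup with `GoodCard` cardinality. -/
lemma exists_greatest_goodCard [Finite G] (b : Bool) :
    ∃ M : Subgroup G, M.Normal ∧ GoodCard p b (Nat.card M) ∧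
      ∀ N : Subgroup G, N.Normal → GoodCard p b (Nat.card N) → N ≤ M := by
  classical
  set S : Set (Subgroup G) := {N | N.Normal ∧ GoodCard p b (Nat.card N)} with hS
  have hbot : (⊥ : Subgroup G) ∈ S := ⟨inferInstance, by simpa using goodCard_one b⟩
  obtain ⟨M, hMS, hMmax⟩ := Set.Finite.exists_maximalFor id S (Set.toFinite S) ⟨⊥, hbot⟩
  refine ⟨M, hMS.1, hMS.2, fun N hN hNg => ?_⟩
  haveI := hMS.1
  have hsup : N ⊔ M ∈ S := by
    refine ⟨Subgroup.sup_normal N M, goodCard_dvd (goodCard_mul hNg hMS.2) (card_sup_dvd N M)⟩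
  have := hMmax hsup le_sup_right
  simp only [id] at this
  exact le_sup_left.trans this

/-- Lifting a nontrivial normal `GoodCard` subgroup of a normal subgroup to the whole group. -/
lemma lift_step [Finite G] (K : Subgroup G) [hK : K.Normal] (b : Bool)
    (h : ∃ N : Subgroup ↥K, N.Normal ∧ N ≠ ⊥ ∧ GoodCard p b (Nat.card N)) :
    ∃ N' : Subgroup G, N'.Normal ∧ N' ≠ ⊥ ∧ GoodCard p b (Nat.card N') := by
  obtain ⟨N, hNn, hNb, hNg⟩ := h
  obtain ⟨M, hMn, hMg, hMmax⟩ := exists_greatest_goodCard (G := ↥K) (p := p) b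
  have hNM : N ≤ M := hMmax N hNn hNg
  have hMbot : M ≠ ⊥ := fun hM => hNb (le_bot_iff.mp (hM ▸ hNM))
  -- M is invariant under every automorphism of K
  have hMinv : ∀ e : ↥K ≃* ↥K, Subgroup.map e.toMonoidHom M = M := by
    intro e
    have hgood : ∀ (f : ↥K ≃* ↥K), (Subgroup.map f.toMonoidHom M).Normal ∧
        GoodCard p b (Nat.card (Subgroup.map f.toMonoidHom M)) := by
      intro f
      refine ⟨Subgroup.Normal.map hMn f.toMonoidHom (f.surjective), ?_⟩
      rwa [Nat.card_congr (M.equivMapOfInjective f.toMonoidHom f.injective).toEquiv] at hMg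
    have h1 : Subgroup.map e.toMonoidHom M ≤ M := hMmax _ (hgood e).1 (hgood e).2
    have h2 : Subgroup.map e.symm.toMonoidHom M ≤ M := hMmax _ (hgood e.symm).1 (hgood e.symm).2
    refine le_antisymm h1 ?_
    intro x hx
    have hx2 : e.symm x ∈ Subgroup.map e.symm.toMonoidHom M := ⟨x, hx, rfl⟩
    exact ⟨e.symm x, h2 hx2, by simp⟩
  refine ⟨M.map K.subtype, ?_, ?_, ?_⟩
  · constructor
    intro x hx t
    obtain ⟨m, hm, rfl⟩ := hx
    show t * (m : G) * t⁻¹ ∈ Subgroup.map K.subtype M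
    have htm : t * (m : G) * t⁻¹ = ((MulAut.conjNormal t m : ↥K) : G) := by
      simp [MulAut.conjNormal_apply]
    rw [htm]
    have : (MulAut.conjNormal t m) ∈ M := by
      have := hMinv (MulAut.conjNormal t : ↥K ≃* ↥K)
      rw [← this]
      exact ⟨m, hm, rfl⟩
    exact ⟨_, this, rfl⟩
  · rwa [ne_eq, Subgroup.map_eq_bot_iff_of_injective M K.subtype_injective]
  · rwa [Nat.card_congr (M.equivMapOfInjective K.subtype K.subtype_injective).toEquiv] at hMg

end Structural


section Structural2

variable {p : ℕ} [hp : Fact p.Prime] {G : Type*} [Group G]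

omit hp in
/-- transfer a nontrivial normal GoodCard subgroup along a `MulEquiv`. -/
lemma transfer_goodCard {H K : Type*} [Group H] [Group K] (e : H ≃* K) (b : Bool)
    (h : ∃ N : Subgroup H, N.Normal ∧ N ≠ ⊥ ∧ GoodCard p b (Nat.card N)) :
    ∃ N : Subgroup K, N.Normal ∧ N ≠ ⊥ ∧ GoodCard p b (Nat.card N) := by
  obtain ⟨N, hNn, hNb, hNg⟩ := h
  refine ⟨N.map e.toMonoidHom, Subgroup.Normal.map hNn e.toMonoidHom e.surjective, ?_, ?_⟩
  · rwa [ne_eq, Subgroup.map_eq_bot_iff_of_injective N e.injective]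
  · rwa [Nat.card_congr (N.equivMapOfInjective e.toMonoidHom e.injective).toEquiv] at hNg

theorem exists_normal_goodCard [Finite G] (hps : IsPSolvable p G) (hG : Nontrivial G) :
    ∃ (b : Bool) (N : Subgroup G), N.Normal ∧ N ≠ ⊥ ∧ GoodCard p b (Nat.card N) := by
  obtain ⟨n, s, h0, hlast, hle, hnorm, hfac⟩ := hps
  have key : ∀ i : Fin (n + 1), s i = ⊥ ∨
      ∃ (b : Bool) (N : Subgroup ↥(s i)), N.Normal ∧ N ≠ ⊥ ∧ GoodCard p b (Nat.card N) := by
    intro i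
    induction i using Fin.induction with
    | zero => exact Or.inl h0
    | succ i ih =>
      haveI := hnorm i
      by_cases hsb : s i.succ = ⊥
      · exact Or.inl hsb
      right
      rcases ih with hbot | ⟨b, N, hNn, hNb, hNg⟩
      · -- the factor is the whole of `s i.succ`
        have hrel : (s i.castSucc).relIndex (s i.succ) = Nat.card ↥(s i.succ) := by
          rw [hbot]; exact Subgroup.relIndex_bot_left _
        have hcard : ∃ b : Bool, GoodCard p b (Nat.card ↥(s i.succ)) := by
          rcases hfac i with ⟨k, hk⟩ | hnd
          · exact ⟨true, ⟨k, by rwa [hrel] at hk⟩⟩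
          · exact ⟨false, by rwa [hrel] at hnd⟩
        obtain ⟨b, hb⟩ := hcard
        haveI : Nontrivial ↥(s i.succ) := (Subgroup.nontrivial_iff_ne_bot _).mpr hsb
        refine ⟨b, ⊤, inferInstance, ?_, by rwa [Subgroup.card_top]⟩
        intro h
        obtain ⟨x, y, hxy⟩ := ‹Nontrivial ↥(s i.succ)›
        apply hxy
        have hx : x ∈ (⊥ : Subgroup ↥(s i.succ)) := h ▸ Subgroup.mem_top x
        have hy : y ∈ (⊥ : Subgroup ↥(s i.succ)) := h ▸ Subgroup.mem_top y
        rw [Subgroup.mem_bot] at hx hy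
        rw [hx, hy]
      · -- lift the subgroup from `s i.castSucc` into `s i.succ`
        refine ⟨b, ?_⟩
        apply lift_step ((s i.castSucc).subgroupOf (s i.succ)) b
        exact transfer_goodCard (Subgroup.subgroupOfEquivOfLe (hle i)).symm b ⟨N, hNn, hNb, hNg⟩
  rcases key (Fin.last n) with hbot | ⟨b, N, hN⟩
  · rw [hlast] at hbot
    obtain ⟨x, y, hxy⟩ := hG
    exfalso
    apply hxy
    have hx : x ∈ (⊥ : Subgroup G) := hbot ▸ Subgroup.mem_top x
    have hy : y ∈ (⊥ : Subgroup G) := hbot ▸ Subgroup.mem_top y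
    rw [Subgroup.mem_bot] at hx hy
    rw [hx, hy]

  · refine ⟨b, ?_⟩
    exact transfer_goodCard ((MulEquiv.subgroupCongr hlast).trans Subgroup.topEquiv) b ⟨N, hN⟩

end Structural2



section ModuleSide

variable {k G : Type} [CommRing k] [Group G]

/-- Any `G`-invariant submodule of a simple representation is `⊥` or `⊤`. -/
lemma invariant_eq_bot_or_top (A : Rep k G) [Simple A] (W : Submodule k A)
    (hW : ∀ (g : G) (x : ↥A), x ∈ W → A.ρ g x ∈ W) : W = ⊥ ∨ W = ⊤ := by
  by_cases hbot : W = ⊥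
  · exact Or.inl hbot
  right
  -- build the subrepresentation
  let ρW : Representation k G ↥W :=
    { toFun := fun g => (A.ρ g).restrict (fun x hx => hW g x hx)
      map_one' := by ext x; simp [LinearMap.restrict_apply]
      map_mul' := fun g h => by ext x; simp [LinearMap.restrict_apply] }
  let B : Rep k G := Rep.of ρW
  let i : B ⟶ A :=
    ConcreteCategory.ofHom (C := Rep k G)
      ({ toLinearMap := W.subtype
         isIntertwining' := fun g => by
          ext x
          show (W.subtype) (ρW g x) = A.ρ g (W.subtype x)
          simp [ρW, LinearMap.restrict_apply] } : B.ρ.IntertwiningMap A.ρ)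
  haveI : Mono i := by
    rw [Rep.mono_iff_injective]
    exact W.injective_subtype
  have hne : i ≠ 0 := by
    obtain ⟨w, hwW, hw⟩ := Submodule.exists_mem_ne_zero_of_ne_bot hbot
    intro h
    apply hw
    have : i.hom ⟨w, hwW⟩ = (0 : B ⟶ A).hom ⟨w, hwW⟩ := by rw [h]
    exact this
  haveI : IsIso i := isIso_of_mono_of_nonzero hne
  have hsurj : Function.Surjective (W.subtype) := by
    have := (Rep.epi_iff_surjective i).mp inferInstance
    exact this
  rw [Submodule.eq_top_iff']
  intro x
  obtain ⟨⟨y, hy⟩, rfl⟩ := hsurj x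
  exact hy

lemma rep_nontrivial (A : Rep k G) [Simple A] : Nontrivial A := by
  rw [← not_subsingleton_iff_nontrivial]
  intro hsub
  apply CategoryTheory.id_nonzero A
  ext x
  exact @Subsingleton.elim _ hsub _ _

lemma rep_finite [Finite G] [Finite k] (A : Rep k G) [Simple A] : Finite A := by
  haveI := rep_nontrivial A
  obtain ⟨v, hv⟩ := exists_ne (0 : A)
  set W : Submodule k A := Submodule.span k (Set.range fun g : G => A.ρ g v) with hWdef
  have hinv : ∀ (g : G) (x : ↥A), x ∈ W → A.ρ g x ∈ W := by
    intro g x hx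
    induction hx using Submodule.span_induction with
    | mem y hy =>
      obtain ⟨h, rfl⟩ := hy
      apply Submodule.subset_span
      refine ⟨g * h, ?_⟩
      show A.ρ (g * h) v = A.ρ g (A.ρ h v)
      rw [map_mul]; rfl
    | zero => simp
    | add y z _ _ hy hz => rw [map_add]; exact W.add_mem hy hz
    | smul c y _ hy => rw [map_smul]; exact W.smul_mem c hy
  have hvW : v ∈ W := Submodule.subset_span ⟨1, by simp⟩
  have hWtop : W = ⊤ := by
    rcases invariant_eq_bot_or_top A W hinv with h | h
    · exact absurd (h ▸ hvW) (by simpa using hv)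
    · exact h
  haveI : Module.Finite k A := by
    rw [Module.finite_def]
    exact ⟨(Set.finite_range fun g : G => A.ρ g v).toFinset, by
      rw [Set.Finite.coe_toFinset]; exact hWtop⟩
  exact Module.finite_of_finite k

end ModuleSide

section Fixed

variable {k G : Type} [CommRing k] [Group G]

/-- The submodule of `N`-fixed points. -/
def fixedSubmodule (A : Rep k G) (N : Subgroup G) : Submodule k A where
  carrier := {x | ∀ n ∈ N, A.ρ n x = x}
  zero_mem' := fun n _ => map_zero _
  add_mem' := fun hx hy n hn => by rw [map_add, hx n hn, hy n hn]
  smul_mem' := fun c x hx n hn => by rw [map_smul, hx n hn]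

lemma mem_fixedSubmodule {A : Rep k G} {N : Subgroup G} {x : A} :
    x ∈ fixedSubmodule A N ↔ ∀ n ∈ N, A.ρ n x = x := Iff.rfl

lemma fixedSubmodule_invariant (A : Rep k G) (N : Subgroup G) [hN : N.Normal] :
    ∀ (g : G) (x : ↥A), x ∈ fixedSubmodule A N → A.ρ g x ∈ fixedSubmodule A N := by
  intro g x hx n hn
  have h2 : g⁻¹ * n * g ∈ N := by
    have := hN.conj_mem n hn g⁻¹
    simpa using this
  have : A.ρ n (A.ρ g x) = A.ρ g (A.ρ (g⁻¹ * n * g) x) := by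
    rw [← Module.End.mul_apply, ← map_mul, ← Module.End.mul_apply, ← map_mul]
    congr 1
    group
  rw [this, hx _ h2]

lemma fixedSubmodule_eq_bot (A : Rep k G) [Simple A] (hfaith : Function.Injective A.ρ)
    (N : Subgroup G) [N.Normal] (hN : N ≠ ⊥) : fixedSubmodule A N = ⊥ := by
  rcases invariant_eq_bot_or_top A (fixedSubmodule A N) (fixedSubmodule_invariant A N) with h | h
  · exact h
  exfalso
  apply hN
  rw [Subgroup.eq_bot_iff_forall]
  intro n hn
  apply hfaith
  ext x
  have : x ∈ fixedSubmodule A N := h ▸ Submodule.mem_top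
  simpa using this n hn

/-- There is no nontrivial normal `p`-subgroup. -/
lemma no_normal_pgroup {p : ℕ} [hp : Fact p.Prime] [Finite G] (A : Rep k G) [Simple A]
    [Finite A] (hfaith : Function.Injective A.ρ) (hcard : p ∣ Nat.card A)
    (N : Subgroup G) [N.Normal] (hN : N ≠ ⊥) {m : ℕ} (hcardN : Nat.card N = p ^ m) :
    False := by
  letI : MulAction ↥N A :=
    { smul := fun n x => A.ρ (↑n) x
      one_smul := fun x => by show A.ρ ((1 : ↥N) : G) x = x; rw [Subgroup.coe_one, map_one]; rfl
      mul_smul := fun m n x => by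
        show A.ρ ((m * n : ↥N) : G) x = A.ρ (↑m) (A.ρ (↑n) x)
        rw [Subgroup.coe_mul, map_mul]; rfl }
  have hsmul : ∀ (n : ↥N) (x : A), n • x = A.ρ (↑n) x := fun _ _ => rfl
  have hPG : IsPGroup p ↥N := IsPGroup.of_card hcardN
  have hmod := IsPGroup.card_modEq_card_fixedPoints hPG (A : Type _)
  have hdvd : p ∣ Nat.card (MulAction.fixedPoints ↥N A) := by
    have : Nat.card (MulAction.fixedPoints ↥N A) ≡ 0 [MOD p] :=
      hmod.symm.trans ((Nat.modEq_zero_iff_dvd).mpr hcard)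
    exact (Nat.modEq_zero_iff_dvd).mp this
  have hzero : (0 : A) ∈ MulAction.fixedPoints ↥N A := by
    intro n
    rw [hsmul, map_zero]
  have hpos : 0 < Nat.card (MulAction.fixedPoints ↥N A) :=
    Nat.card_pos_iff.mpr ⟨⟨⟨0, hzero⟩⟩, Set.Finite.to_subtype (Set.toFinite _)⟩
  have h2 : 2 ≤ Nat.card (MulAction.fixedPoints ↥N A) :=
    le_trans hp.out.two_le (Nat.le_of_dvd hpos hdvd)
  haveI : Nontrivial (MulAction.fixedPoints ↥N A) := Finite.one_lt_card_iff_nontrivial.mp h2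
  obtain ⟨x, hx⟩ := exists_ne (⟨0, hzero⟩ : MulAction.fixedPoints ↥N A)
  have hxfix : (x : A) ∈ fixedSubmodule A N := by
    intro n hn
    exact x.2 ⟨n, hn⟩
  rw [fixedSubmodule_eq_bot A hfaith N hN, Submodule.mem_bot] at hxfix
  apply hx
  ext
  exact hxfix

end Fixed

section Vanish

variable {k G : Type} [Field k] [Group G]

lemma one_vanish (A : Rep k G) (N : Subgroup G) [hNn : N.Normal] [Fintype ↥N]
    (hcne : ((Nat.card ↥N : ℕ) : k) ≠ 0)
    (hfix : ∀ v : A, (∀ n ∈ N, A.ρ n v = v) → v = 0)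
    (f : G → A) (hf : ∀ g h, f (g * h) = A.ρ g (f h) + f g) :
    ∃ y : A, ∀ g, A.ρ g y - y = f g := by
  classical
  set c : k := ((Nat.card ↥N : ℕ) : k) with hc
  set S : A := ∑ m : ↥N, f ↑m with hS
  have key : ∀ n ∈ N, c • f n = S - A.ρ n S := by
    intro n hn
    have h1 : ∑ m : ↥N, f ↑((⟨n, hn⟩ : ↥N) * m) = S := by
      rw [hS]
      exact Fintype.sum_equiv (Equiv.mulLeft (⟨n, hn⟩ : ↥N)) _ _ (fun m => rfl)
    have h2 : ∑ m : ↥N, f ↑((⟨n, hn⟩ : ↥N) * m) = A.ρ n S + (Nat.card ↥N) • f n := by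
      have : ∀ m : ↥N, f ↑((⟨n, hn⟩ : ↥N) * m) = A.ρ n (f ↑m) + f n := by
        intro m
        show f (n * ↑m) = _
        rw [hf n ↑m]
      rw [Finset.sum_congr rfl (fun m _ => this m), Finset.sum_add_distrib, ← map_sum,
        Finset.sum_const, Finset.card_univ, ← Nat.card_eq_fintype_card, hS]
    rw [h1] at h2
    rw [hc, Nat.cast_smul_eq_nsmul, eq_sub_iff_add_eq, add_comm]
    exact h2.symm
  set y : A := -(c⁻¹ • S) with hy
  set f' : G → A := fun g => f g - (A.ρ g y - y) with hf'
  have hf'coc : ∀ g h, f' (g * h) = A.ρ g (f' h) + f' g := by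
    intro g h
    simp only [hf']
    rw [hf g h, map_mul, map_sub, map_sub]
    simp only [Module.End.mul_apply]
    abel
  have hf'N : ∀ n ∈ N, f' n = 0 := by
    intro n hn
    have : f n = A.ρ n y - y := by
      rw [hy]
      have := key n hn
      have hfn : f n = c⁻¹ • (S - A.ρ n S) := by
        rw [← this, smul_smul, inv_mul_cancel₀ hcne, one_smul]
      rw [hfn, map_neg, map_smul, smul_sub]
      abel
    show f n - (A.ρ n y - y) = 0
    rw [this]
    abel
  have hf'fix : ∀ g, f' g = 0 := by
    intro g
    apply hfix
    intro n hn
    have h1 : f' (n * g) = A.ρ n (f' g) + f' n := hf'coc n g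
    rw [hf'N n hn, add_zero] at h1
    have h2 : n * g = g * (g⁻¹ * n * g) := by group
    have h3 : g⁻¹ * n * g ∈ N := by simpa using hNn.conj_mem n hn g⁻¹
    rw [h2, hf'coc g _, hf'N _ h3, map_zero, zero_add] at h1
    exact h1.symm
  refine ⟨y, fun g => ?_⟩
  have h9 : f g - (A.ρ g y - y) = 0 := hf'fix g
  rw [sub_eq_zero] at h9
  exact h9.symm

end Vanish


/-- The underlying type of the extension of `G` by `V` defined by a `2`-cocycle. -/
@[ext] structure CExt (G V : Type*) where
  g : G
  v : V

/-- The group structure on `CExt G V` coming from a normalized `2`-cocycle `F`. -/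
def cextGroup {k G V : Type*} [CommRing k] [Group G] [AddCommGroup V] [Module k V]
    (ρ : Representation k G V) (F : G × G → V)
    (hco : ∀ g h j : G, F (g * h, j) + F (g, h) = ρ g (F (h, j)) + F (g, h * j))
    (h1 : ∀ g, F (1, g) = 0) (h2 : ∀ g, F (g, 1) = 0) : Group (CExt G V) where
  mul a b := ⟨a.g * b.g, a.v + ρ a.g b.v + F (a.g, b.g)⟩
  one := ⟨1, 0⟩
  inv a := ⟨a.g⁻¹, -(ρ a.g⁻¹ a.v) - F (a.g⁻¹, a.g)⟩
  mul_assoc a b c := by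
    have h : F (a.g * b.g, c.g) = ρ a.g (F (b.g, c.g)) + F (a.g, b.g * c.g) - F (a.g, b.g) :=
      eq_sub_iff_add_eq.mpr (hco a.g b.g c.g)
    ext
    · exact mul_assoc _ _ _
    · show (a.v + ρ a.g b.v + F (a.g, b.g)) + ρ (a.g * b.g) c.v + F (a.g * b.g, c.g) =
        a.v + ρ a.g (b.v + ρ b.g c.v + F (b.g, c.g)) + F (a.g, b.g * c.g)
      rw [h, map_mul, map_add, map_add]
      simp only [Module.End.mul_apply]
      abel
  one_mul a := by
    ext
    · exact one_mul _
    · show 0 + ρ 1 a.v + F (1, a.g) = a.v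
      rw [h1, map_one]
      simp
  mul_one a := by
    ext
    · exact mul_one _
    · show a.v + ρ a.g 0 + F (a.g, 1) = a.v
      rw [h2, map_zero]
      simp
  inv_mul_cancel a := by
    show CExt.mk _ _ = CExt.mk 1 0
    ext
    · exact inv_mul_cancel _
    · show (-(ρ a.g⁻¹ a.v) - F (a.g⁻¹, a.g)) + ρ a.g⁻¹ a.v + F (a.g⁻¹, a.g) = 0
      abel

section TwoVanish

variable {k G : Type} [Field k] [Group G]

lemma two_vanish (A : Rep k G) (N : Subgroup G) [hNn : N.Normal] [Fintype ↥N]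
    (hcne : ((Nat.card ↥N : ℕ) : k) ≠ 0)
    (hfix : ∀ v : A, (∀ n ∈ N, A.ρ n v = v) → v = 0)
    (F : G × G → A)
    (hF : ∀ g h j : G, F (g * h, j) + F (g, h) = A.ρ g (F (h, j)) + F (g, h * j)) :
    ∃ x : G → A, ∀ g h : G, A.ρ g (x h) - x (g * h) + x g = F (g, h) := by
  classical
  set c : k := ((Nat.card ↥N : ℕ) : k) with hc
  -- Step 1 : make the cocycle vanish on N × N
  set T : G → A := fun g => ∑ m : ↥N, F (g, ↑m) with hT
  set u : G → A := fun g => c⁻¹ • T g with hu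
  set F₂ : G × G → A := fun q => F q - (A.ρ q.1 (u q.2) - u (q.1 * q.2) + u q.1) with hF₂def
  have hF₂ : ∀ g h j : G, F₂ (g * h, j) + F₂ (g, h) = A.ρ g (F₂ (h, j)) + F₂ (g, h * j) := by
    intro g h j
    show (F (g * h, j) - (A.ρ (g * h) (u j) - u (g * h * j) + u (g * h)))
        + (F (g, h) - (A.ρ g (u h) - u (g * h) + u g))
      = A.ρ g (F (h, j) - (A.ρ h (u j) - u (h * j) + u h))
        + (F (g, h * j) - (A.ρ g (u (h * j)) - u (g * (h * j)) + u g))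
    rw [show F (g * h, j) = A.ρ g (F (h, j)) + F (g, h * j) - F (g, h) from
      eq_sub_iff_add_eq.mpr (hF g h j), map_mul, mul_assoc]
    simp only [Module.End.mul_apply, map_sub, map_add]
    abel
  have hF₂N : ∀ n ∈ N, ∀ n' ∈ N, F₂ (n, n') = 0 := by
    intro n hn n' hn'
    have hsum : ∑ m : ↥N, (F (n * n', ↑m) + F (n, n'))
        = ∑ m : ↥N, (A.ρ n (F (n', ↑m)) + F (n, n' * ↑m)) :=
      Finset.sum_congr rfl (fun m _ => hF n n' ↑m)
    have hL : ∑ m : ↥N, (F (n * n', ↑m) + F (n, n'))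
        = T (n * n') + (Nat.card ↥N) • F (n, n') := by
      rw [Finset.sum_add_distrib, Finset.sum_const, Finset.card_univ,
        ← Nat.card_eq_fintype_card, hT]
    have hre : ∑ m : ↥N, F (n, ↑((⟨n', hn'⟩ : ↥N) * m)) = T n := by
      rw [hT]
      exact Fintype.sum_equiv (Equiv.mulLeft (⟨n', hn'⟩ : ↥N)) _ _ (fun m => rfl)
    have hR : ∑ m : ↥N, (A.ρ n (F (n', ↑m)) + F (n, n' * ↑m))
        = A.ρ n (T n') + T n := by
      rw [Finset.sum_add_distrib, ← map_sum, ← hre, hT]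
      rfl
    have hkey : (Nat.card ↥N) • F (n, n') = A.ρ n (T n') + T n - T (n * n') := by
      rw [eq_sub_iff_add_eq, add_comm, ← hL, hsum, hR]
    have hFnn : F (n, n') = c⁻¹ • (A.ρ n (T n') + T n - T (n * n')) := by
      rw [← hkey, ← Nat.cast_smul_eq_nsmul k, ← hc, smul_smul, inv_mul_cancel₀ hcne, one_smul]
    show F (n, n') - (A.ρ n (u n') - u (n * n') + u n) = 0
    rw [hFnn]
    simp only [hu, map_smul, smul_sub, smul_add]
    abel
  -- F₂ is a cocycle vanishing on N × N, hence normalized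
  have hF₂mem : F₂ ∈ groupCohomology.cocycles₂ A :=
    (groupCohomology.mem_cocycles₂_iff F₂).mpr hF₂
  have h11 : F₂ (1, 1) = 0 := hF₂N 1 (one_mem N) 1 (one_mem N)
  have h1g : ∀ g : G, F₂ (1, g) = 0 := fun g =>
    (groupCohomology.cocycles₂_map_one_fst (⟨F₂, hF₂mem⟩ : groupCohomology.cocycles₂ A) g).trans h11
  have hg1 : ∀ g : G, F₂ (g, 1) = 0 := fun g => by
    have := groupCohomology.cocycles₂_map_one_snd (⟨F₂, hF₂mem⟩ : groupCohomology.cocycles₂ A) g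
    rw [show ((⟨F₂, hF₂mem⟩ : groupCohomology.cocycles₂ A) (1, 1) : A) = 0 from h11,
      map_zero] at this
    exact this
  -- the extension group
  letI : Group (CExt G A) := cextGroup A.ρ F₂ hF₂ h1g hg1
  have mul_def : ∀ a b : CExt G A,
      a * b = ⟨a.g * b.g, a.v + A.ρ a.g b.v + F₂ (a.g, b.g)⟩ := fun _ _ => rfl
  set γ : G → G → A := fun g n => F₂ (g, n) - F₂ (g * n * g⁻¹, g) with hγdef
  have hbase : ∀ g n : G,
      (CExt.mk g (0 : A)) * (CExt.mk n 0) = (CExt.mk (g * n * g⁻¹) (γ g n)) * (CExt.mk g 0) := by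
    intro g n
    rw [mul_def, mul_def]
    ext
    · show g * n = (g * n * g⁻¹) * g
      group
    · show (0 : A) + A.ρ g 0 + F₂ (g, n) = γ g n + A.ρ (g * n * g⁻¹) 0 + F₂ (g * n * g⁻¹, g)
      rw [hγdef]
      simp only [map_zero, zero_add, add_zero]
      abel
  have hNmul : ∀ n ∈ N, ∀ n' ∈ N,
      (CExt.mk n (0 : A)) * (CExt.mk n' 0) = CExt.mk (n * n') 0 := by
    intro n hn n' hn'
    rw [mul_def]
    ext
    · rfl
    · show (0 : A) + A.ρ n 0 + F₂ (n, n') = 0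
      rw [hF₂N n hn n' hn', map_zero]
      abel
  have hconj : ∀ (w : G), ∀ n ∈ N, w * n * w⁻¹ ∈ N := by
    intro w n hn
    exact hNn.conj_mem n hn w
  have hγcoc : ∀ (g : G), ∀ n ∈ N, ∀ n' ∈ N,
      γ g (n * n') = γ g n + A.ρ (g * n * g⁻¹) (γ g n') := by
    intro g n hn n' hn'
    have hcalc : (CExt.mk (g * (n * n') * g⁻¹) (γ g (n * n'))) * (CExt.mk g (0 : A))
        = ((CExt.mk (g * n * g⁻¹) (γ g n)) * (CExt.mk (g * n' * g⁻¹) (γ g n'))) * (CExt.mk g 0) := by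
      calc (CExt.mk (g * (n * n') * g⁻¹) (γ g (n * n'))) * (CExt.mk g (0 : A))
          = (CExt.mk g 0) * (CExt.mk (n * n') 0) := (hbase g (n * n')).symm
        _ = (CExt.mk g 0) * ((CExt.mk n 0) * (CExt.mk n' 0)) := by
            rw [hNmul n hn n' hn']
        _ = ((CExt.mk g 0) * (CExt.mk n 0)) * (CExt.mk n' 0) := (mul_assoc _ _ _).symm
        _ = ((CExt.mk (g * n * g⁻¹) (γ g n)) * (CExt.mk g 0)) * (CExt.mk n' 0) := by
            rw [hbase g n]
        _ = (CExt.mk (g * n * g⁻¹) (γ g n)) * ((CExt.mk g 0) * (CExt.mk n' 0)) := mul_assoc _ _ _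
        _ = (CExt.mk (g * n * g⁻¹) (γ g n)) * ((CExt.mk (g * n' * g⁻¹) (γ g n')) * (CExt.mk g 0)) := by
            rw [hbase g n']
        _ = ((CExt.mk (g * n * g⁻¹) (γ g n)) * (CExt.mk (g * n' * g⁻¹) (γ g n'))) * (CExt.mk g 0) :=
            (mul_assoc _ _ _).symm
    have h5 := mul_right_cancel hcalc
    rw [mul_def] at h5
    have hv := congrArg CExt.v h5
    simp only at hv
    rw [hv, hF₂N _ (hconj g n hn) _ (hconj g n' hn')]
    abel
  -- averaging : find x g with γ g n = ρ (g n g⁻¹) (x g) - x g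
  set T2 : G → A := fun g => ∑ m : ↥N, γ g (g⁻¹ * ↑m * g) with hT2
  set x : G → A := fun g => -(c⁻¹ • T2 g) with hx
  have hxg : ∀ (g : G), ∀ n ∈ N, γ g n = A.ρ (g * n * g⁻¹) (x g) - x g := by
    intro g n hn
    have hm1 : g * n * g⁻¹ ∈ N := hconj g n hn
    have hback : ∀ w : G, g⁻¹ * ((g * n * g⁻¹) * w) * g = n * (g⁻¹ * w * g) := by
      intro w; group
    have hmem : ∀ m : ↥N, g⁻¹ * ↑m * g ∈ N := by
      intro m
      have := hNn.conj_mem ↑m m.2 g⁻¹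
      simpa using this
    have hstep : ∀ m : ↥N, γ g (g⁻¹ * ↑((⟨g * n * g⁻¹, hm1⟩ : ↥N) * m) * g)
        = γ g n + A.ρ (g * n * g⁻¹) (γ g (g⁻¹ * ↑m * g)) := by
      intro m
      have hco : g⁻¹ * ↑((⟨g * n * g⁻¹, hm1⟩ : ↥N) * m) * g = n * (g⁻¹ * ↑m * g) := by
        rw [Subgroup.coe_mul]
        exact hback ↑m
      rw [hco]
      exact hγcoc g n hn _ (hmem m)
    have hre2 : ∑ m : ↥N, γ g (g⁻¹ * ↑((⟨g * n * g⁻¹, hm1⟩ : ↥N) * m) * g) = T2 g := by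
      rw [hT2]
      exact Fintype.sum_equiv (Equiv.mulLeft (⟨g * n * g⁻¹, hm1⟩ : ↥N)) _ _ (fun m => rfl)
    have hsum2 : (Nat.card ↥N) • γ g n + A.ρ (g * n * g⁻¹) (T2 g) = T2 g := by
      calc (Nat.card ↥N) • γ g n + A.ρ (g * n * g⁻¹) (T2 g)
          = ∑ m : ↥N, (γ g n + A.ρ (g * n * g⁻¹) (γ g (g⁻¹ * ↑m * g))) := by
            rw [Finset.sum_add_distrib, Finset.sum_const, Finset.card_univ,
              ← Nat.card_eq_fintype_card, ← map_sum]
        _ = ∑ m : ↥N, γ g (g⁻¹ * ↑((⟨g * n * g⁻¹, hm1⟩ : ↥N) * m) * g) :=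
            Finset.sum_congr rfl (fun m _ => (hstep m).symm)
        _ = T2 g := hre2
    have hkey2 : (Nat.card ↥N) • γ g n = T2 g - A.ρ (g * n * g⁻¹) (T2 g) := by
      rw [eq_sub_iff_add_eq]
      exact hsum2
    have : γ g n = c⁻¹ • (T2 g - A.ρ (g * n * g⁻¹) (T2 g)) := by
      rw [← hkey2, ← Nat.cast_smul_eq_nsmul k, ← hc, smul_smul, inv_mul_cancel₀ hcne, one_smul]
    rw [this, hx]
    simp only [map_neg, map_smul, smul_sub]
    abel
  have hsig : ∀ (g : G), ∀ n ∈ N,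
      (CExt.mk g (x g)) * (CExt.mk n (0 : A)) = (CExt.mk (g * n * g⁻¹) 0) * (CExt.mk g (x g)) := by
    intro g n hn
    rw [mul_def, mul_def]
    ext
    · show g * n = (g * n * g⁻¹) * g
      group
    · show x g + A.ρ g 0 + F₂ (g, n) = 0 + A.ρ (g * n * g⁻¹) (x g) + F₂ (g * n * g⁻¹, g)
      have h6 : F₂ (g, n) - F₂ (g * n * g⁻¹, g) = A.ρ (g * n * g⁻¹) (x g) - x g := hxg g n hn
      rw [sub_eq_iff_eq_add] at h6
      rw [h6, map_zero]
      abel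
  set t : G → G → A := fun g h => x g + A.ρ g (x h) + F₂ (g, h) - x (g * h) with ht
  have hsigmul : ∀ g h : G,
      (CExt.mk g (x g)) * (CExt.mk h (x h)) = (CExt.mk 1 (t g h)) * (CExt.mk (g * h) (x (g * h))) := by
    intro g h
    rw [mul_def, mul_def]
    ext
    · show g * h = 1 * (g * h)
      rw [one_mul]
    · show x g + A.ρ g (x h) + F₂ (g, h) = t g h + A.ρ 1 (x (g * h)) + F₂ (1, g * h)
      rw [h1g, map_one, ht]
      simp only [Module.End.one_apply, add_zero]
      abel
  have htfix : ∀ g h : G, t g h = 0 := by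
    intro g h
    apply hfix
    intro n' hn'
    set n : G := (g * h)⁻¹ * n' * (g * h) with hn
    have hnN : n ∈ N := by
      rw [hn]
      have := hNn.conj_mem n' hn' (g * h)⁻¹
      simpa [mul_assoc] using this
    have e1 : (g * h) * n * (g * h)⁻¹ = n' := by rw [hn]; group
    have e2 : g * (h * n * h⁻¹) * g⁻¹ = n' := by rw [hn]; group
    have hnN2 : h * n * h⁻¹ ∈ N := hconj h n hnN
    have chainA : ((CExt.mk g (x g)) * (CExt.mk h (x h))) * (CExt.mk n (0 : A))
        = (CExt.mk n' 0) * ((CExt.mk g (x g)) * (CExt.mk h (x h))) := by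
      calc ((CExt.mk g (x g)) * (CExt.mk h (x h))) * (CExt.mk n (0 : A))
          = (CExt.mk g (x g)) * ((CExt.mk h (x h)) * (CExt.mk n 0)) := mul_assoc _ _ _
        _ = (CExt.mk g (x g)) * ((CExt.mk (h * n * h⁻¹) 0) * (CExt.mk h (x h))) := by
            rw [hsig h n hnN]
        _ = ((CExt.mk g (x g)) * (CExt.mk (h * n * h⁻¹) 0)) * (CExt.mk h (x h)) :=
            (mul_assoc _ _ _).symm
        _ = ((CExt.mk (g * (h * n * h⁻¹) * g⁻¹) 0) * (CExt.mk g (x g))) * (CExt.mk h (x h)) := by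
            rw [hsig g _ hnN2]
        _ = (CExt.mk n' 0) * ((CExt.mk g (x g)) * (CExt.mk h (x h))) := by
            rw [e2, mul_assoc]
    have chainB : (CExt.mk (g * h) (x (g * h))) * (CExt.mk n (0 : A))
        = (CExt.mk n' 0) * (CExt.mk (g * h) (x (g * h))) := by
      rw [hsig (g * h) n hnN, e1]
    rw [hsigmul g h] at chainA
    rw [mul_assoc, chainB, ← mul_assoc, ← mul_assoc] at chainA
    have h7 := mul_right_cancel chainA
    rw [mul_def, mul_def] at h7
    have hv := congrArg CExt.v h7
    simp only at hv
    rw [h1g, hg1] at hv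
    simp only [map_zero, add_zero, zero_add] at hv
    exact hv.symm
  refine ⟨fun g => u g - x g, fun g h => ?_⟩
  have h8 : A.ρ g (x h) - x (g * h) + x g = -F₂ (g, h) := by
    have := htfix g h
    rw [ht] at this
    simp only at this
    rw [eq_comm, neg_eq_iff_add_eq_zero, ← this]
    abel
  have h9 : F (g, h) = F₂ (g, h) + (A.ρ g (u h) - u (g * h) + u g) := by
    show F (g, h) = F (g, h) - (A.ρ g (u h) - u (g * h) + u g) + (A.ρ g (u h) - u (g * h) + u g)
    abel
  rw [map_sub]
  rw [h9]
  rw [show A.ρ g (u h) - A.ρ g (x h) - (u (g * h) - x (g * h)) + (u g - x g)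
    = (A.ρ g (u h) - u (g * h) + u g) - (A.ρ g (x h) - x (g * h) + x g) from by abel, h8]
  abel

end TwoVanish


section GoodCardIff
variable {p : ℕ}

lemma goodCard_true_iff {n : ℕ} : GoodCard p true n ↔ ∃ k, n = p ^ k := by simp [GoodCard]

lemma goodCard_false_iff {n : ℕ} : GoodCard p false n ↔ ¬ p ∣ n := by simp [GoodCard]

end GoodCardIff

theorem stmt3 {G : Type} [Group G] [Finite G] (p : ℕ) [Fact p.Prime]
    (hps : IsPSolvable p G) (A : Rep (ZMod p) G) [Simple A]
    (hfaith : Function.Injective A.ρ) (hcard : p ∣ Nat.card A) :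
    Subsingleton (groupCohomology.H1 A) ∧ Subsingleton (groupCohomology.H2 A) := by
  haveI : Finite A := rep_finite A
  by_cases hG : Nontrivial G
  · obtain ⟨b, N, hNnorm, hNbot, hNgood⟩ := exists_normal_goodCard hps hG
    haveI := hNnorm
    cases b with
    | true =>
      obtain ⟨m, hm⟩ := goodCard_true_iff.mp hNgood
      exact absurd hm (fun hm => no_normal_pgroup (p := p) A hfaith hcard N hNbot hm)
    | false =>
      have hnd : ¬ p ∣ Nat.card ↥N := goodCard_false_iff.mp hNgood
      have hcne : ((Nat.card ↥N : ℕ) : ZMod p) ≠ 0 := fun h =>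
        hnd ((ZMod.natCast_eq_zero_iff _ p).mp h)
      have hfix : ∀ v : A, (∀ n ∈ N, A.ρ n v = v) → v = 0 := by
        intro v hv
        have : v ∈ fixedSubmodule A N := hv
        rwa [fixedSubmodule_eq_bot A hfaith N hNbot, Submodule.mem_bot] at this
      haveI : Fintype ↥N := Fintype.ofFinite _
      constructor
      · refine ⟨fun a b => ?_⟩
        have hall : ∀ x : groupCohomology.H1 A, x = 0 := fun x =>
          groupCohomology.H1_induction_on x fun f => by
            rw [groupCohomology.H1π_eq_zero_iff, groupCohomology.coboundaries₁, LinearMap.mem_range]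
            obtain ⟨y, hy⟩ :=
              one_vanish A N hcne hfix f ((groupCohomology.mem_cocycles₁_iff (A := A) f).1 f.2)
            exact ⟨y, funext fun g => hy g⟩
        rw [hall a, hall b]
      · refine ⟨fun a b => ?_⟩
        have hall : ∀ x : groupCohomology.H2 A, x = 0 := fun x =>
          groupCohomology.H2_induction_on x fun f => by
            rw [groupCohomology.H2π_eq_zero_iff, groupCohomology.coboundaries₂, LinearMap.mem_range]
            obtain ⟨y, hy⟩ :=
              two_vanish A N hcne hfix f ((groupCohomology.mem_cocycles₂_iff (A := A) f).1 f.2)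
            exact ⟨y, funext fun q => hy q.1 q.2⟩
        rw [hall a, hall b]
  · -- G is trivial
    rw [not_nontrivial_iff_subsingleton] at hG
    constructor
    · refine ⟨fun a b => ?_⟩
      have hall : ∀ x : groupCohomology.H1 A, x = 0 := fun x =>
        groupCohomology.H1_induction_on x fun f => by
          rw [groupCohomology.H1π_eq_zero_iff, groupCohomology.coboundaries₁, LinearMap.mem_range]
          refine ⟨0, funext fun g => ?_⟩
          show A.ρ g 0 - 0 = f g
          rw [map_zero, sub_zero]
          have hg1 : g = 1 := Subsingleton.elim g 1
          rw [hg1]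
          exact (groupCohomology.cocycles₁_map_one f).symm
      rw [hall a, hall b]
    · refine ⟨fun a b => ?_⟩
      have hall : ∀ x : groupCohomology.H2 A, x = 0 := fun x =>
        groupCohomology.H2_induction_on x fun f => by
          rw [groupCohomology.H2π_eq_zero_iff, groupCohomology.coboundaries₂, LinearMap.mem_range]
          refine ⟨fun _ => f (1, 1), funext fun q => ?_⟩
          obtain ⟨g, h⟩ := q
          show A.ρ g (f (1, 1)) - f (1, 1) + f (1, 1) = f (g, h)
          have hg1 : g = 1 := Subsingleton.elim g 1
          have hh1 : h = 1 := Subsingleton.elim h 1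
          rw [hg1, hh1, map_one]
          simp only [Module.End.one_apply, one_mul]
          abel
      rw [hall a, hall b]
end

section
/- Let M be a maximal subgroup of a finite group G, and suppose G is p-solvable for a prime p dividing |G:M|. Then G/Core_G(M) has a unique minimal normal subgroup X_M; X_M is an elementary abelian p-group; X_M equals C_G(X_M)/Core_G(M); moreover M·C_G(X_M) = G, M ∩ C_G(X_M) = Core_G(M), and |G:M| = |X_M| is a power of p. -/
set_option maxHeartbeats 1600000
set_option linter.unusedSectionVars false
set_option linter.unusedVariables false


open scoped Pointwise

/-- `X` is a minimal normal subgroup. -/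
def IsMinNormal {G : Type*} [Group G] (X : Subgroup G) : Prop :=
  X ≠ ⊥ ∧ X.Normal ∧ ∀ Y : Subgroup G, Y.Normal → Y ≤ X → Y = ⊥ ∨ Y = X


namespace PSolv

open Subgroup

variable {Y : Type*} [Group Y]

theorem map_conj_eq {k : Y} {H : Subgroup Y} (hk : k ∈ (Subgroup.normalizer (SetLike.coe H))) :
    Subgroup.map (MulAut.conj k).toMonoidHom H = H := by
  ext x
  rw [Subgroup.mem_map_equiv]
  have h2 := Subgroup.mem_normalizer_iff.mp hk (k⁻¹ * x * k)
  have e : k * (k⁻¹ * x * k) * k⁻¹ = x := by group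
  rw [e] at h2
  simpa using h2

theorem mem_normalizer_of_map_conj {k : Y} {H : Subgroup Y}
    (h : Subgroup.map (MulAut.conj k).toMonoidHom H = H) : k ∈ (Subgroup.normalizer (SetLike.coe H)) := by
  rw [Subgroup.mem_normalizer_iff]
  intro x
  constructor
  · intro hx
    have : (MulAut.conj k) x ∈ Subgroup.map (MulAut.conj k).toMonoidHom H :=
      Subgroup.mem_map_of_mem _ hx
    rw [h] at this
    simpa [MulAut.conj_apply] using this
  · intro hx
    rw [← h, Subgroup.mem_map_equiv] at hx
    simpa [MulAut.conj_symm_apply, mul_assoc] using hx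

theorem le_normalizer_sup {K H1 H2 : Subgroup Y} (h1 : K ≤ (Subgroup.normalizer (SetLike.coe H1)))
    (h2 : K ≤ (Subgroup.normalizer (SetLike.coe H2))) : K ≤ (Subgroup.normalizer (SetLike.coe (H1 ⊔ H2))) := by
  intro k hk
  refine mem_normalizer_of_map_conj ?_
  rw [Subgroup.map_sup, map_conj_eq (h1 hk), map_conj_eq (h2 hk)]

end PSolv

namespace PSolv
variable {Y : Type*} [Group Y]

theorem subgroupOf_sup_eq_top {H1 H2 : Subgroup Y} :
    H1.subgroupOf (H1 ⊔ H2) ⊔ H2.subgroupOf (H1 ⊔ H2) = ⊤ := by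
  apply Subgroup.map_injective (H1 ⊔ H2).subtype_injective
  rw [Subgroup.map_sup, Subgroup.subgroupOf_map_subtype, Subgroup.subgroupOf_map_subtype,
    ← MonoidHom.range_eq_map, Subgroup.range_subtype,
    inf_of_le_left (le_sup_left : H1 ≤ H1 ⊔ H2),
    inf_of_le_left (le_sup_right : H2 ≤ H1 ⊔ H2)]

theorem card_sup_dvd [Finite Y] {H1 H2 : Subgroup Y} (h : H2 ≤ (Subgroup.normalizer (SetLike.coe H1))) :
    Nat.card ↥(H1 ⊔ H2) ∣ Nat.card H1 * Nat.card H2 := by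
  set L := H1 ⊔ H2 with hL
  have hL1 : H1 ≤ L := le_sup_left
  have hL2 : H2 ≤ L := le_sup_right
  have hLn : L ≤ (Subgroup.normalizer (SetLike.coe H1)) := sup_le Subgroup.le_normalizer h
  haveI hnorm : (H1.subgroupOf L).Normal := by
    rw [Subgroup.normal_subgroupOf_iff hL1]
    intro a k ha hk
    exact (Subgroup.mem_normalizer_iff.mp (hLn hk) a).mp ha
  have hcard : Nat.card (H1.subgroupOf L) * (H1.subgroupOf L).index = Nat.card L :=
    Subgroup.card_mul_index _
  have hc1 : Nat.card (H1.subgroupOf L) = Nat.card H1 :=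
    Nat.card_congr (Subgroup.subgroupOfEquivOfLe hL1).toEquiv
  have hdvd : (H1.subgroupOf L).index ∣ Nat.card H2 := by
    rw [Subgroup.index_eq_card]
    let φ : H2 →* (↥L ⧸ H1.subgroupOf L) :=
      (QuotientGroup.mk' (H1.subgroupOf L)).comp (Subgroup.inclusion hL2)
    have hφ : Function.Surjective φ := by
      intro q
      obtain ⟨l, rfl⟩ := QuotientGroup.mk'_surjective _ q
      have hl : l ∈ ((H2.subgroupOf L ⊔ H1.subgroupOf L : Subgroup ↥L) : Set ↥L) := by
        rw [sup_comm (H2.subgroupOf L), subgroupOf_sup_eq_top]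
        trivial
      rw [Subgroup.mul_normal] at hl
      obtain ⟨a, ha, b, hb, rfl⟩ := hl
      refine ⟨⟨(a : Y), ha⟩, ?_⟩
      show QuotientGroup.mk (Subgroup.inclusion hL2 ⟨(a : Y), ha⟩) = QuotientGroup.mk (a * b)
      rw [QuotientGroup.eq]
      have : Subgroup.inclusion hL2 (⟨(a : Y), ha⟩ : H2) = a := by ext; rfl
      rw [this]
      simpa using hb
    calc Nat.card (↥L ⧸ H1.subgroupOf L) = Nat.card (↥H2 ⧸ φ.ker) :=
        Nat.card_congr (QuotientGroup.quotientKerEquivOfSurjective φ hφ).toEquiv.symm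
      _ ∣ Nat.card H2 := Subgroup.card_quotient_dvd_card _
  calc Nat.card ↥L = Nat.card H1 * (H1.subgroupOf L).index := by rw [← hcard, hc1]
    _ ∣ Nat.card H1 * Nat.card H2 := mul_dvd_mul_left _ hdvd

end PSolv

namespace PSolv
variable {Y : Type*} [Group Y] [Finite Y] {cond : ℕ → Prop} {K : Subgroup Y}

def goodSet (cond : ℕ → Prop) (K : Subgroup Y) : Set (Subgroup Y) :=
  {H | H ≤ K ∧ K ≤ (Subgroup.normalizer (SetLike.coe H)) ∧ cond (Nat.card H)}

noncomputable def sCore (cond : ℕ → Prop) (K : Subgroup Y) : Subgroup Y :=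
  sSup (goodSet cond K)

theorem bot_mem_goodSet (h1 : cond 1) : (⊥ : Subgroup Y) ∈ goodSet cond K := by
  refine ⟨bot_le, fun k _ => mem_normalizer_of_map_conj (by rw [Subgroup.map_bot]), ?_⟩
  rw [Subgroup.card_bot]; exact h1

theorem sup_mem_goodSet (hmul : ∀ a b d, cond a → cond b → d ∣ a * b → cond d)
    {H1 H2 : Subgroup Y} (h1 : H1 ∈ goodSet cond K) (h2 : H2 ∈ goodSet cond K) :
    H1 ⊔ H2 ∈ goodSet cond K :=
  ⟨sup_le h1.1 h2.1, le_normalizer_sup h1.2.1 h2.2.1,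
    hmul _ _ _ h1.2.2 h2.2.2 (card_sup_dvd (h2.1.trans h1.2.1))⟩

theorem sCore_mem (h1 : cond 1) (hmul : ∀ a b d, cond a → cond b → d ∣ a * b → cond d) :
    sCore cond K ∈ goodSet cond K := by
  classical
  have hfin : (goodSet cond K).Finite := Set.toFinite _
  have key : ∀ t : Finset (Subgroup Y), (↑t ⊆ goodSet cond K) → t.sup id ∈ goodSet cond K := by
    intro t
    induction t using Finset.induction with
    | empty => intro _; simpa using bot_mem_goodSet h1
    | @insert a s ha ih =>
      intro hsub
      rw [Finset.sup_insert]
      exact sup_mem_goodSet hmul (hsub (Finset.mem_insert_self a s))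
        (ih (fun x hx => hsub (Finset.mem_insert_of_mem hx)))
  have heq : hfin.toFinset.sup id = sCore cond K := by
    rw [Finset.sup_id_eq_sSup, Set.Finite.coe_toFinset]; rfl
  rw [← heq]
  exact key _ (by simp)

theorem conj_mem_goodSet (hmul : ∀ a b d, cond a → cond b → d ∣ a * b → cond d)
    {l : Y} (hl : l ∈ (Subgroup.normalizer (SetLike.coe K))) {H : Subgroup Y} (hH : H ∈ goodSet cond K) :
    Subgroup.map (MulAut.conj l).toMonoidHom H ∈ goodSet cond K := by
  obtain ⟨hHK, hKn, hc⟩ := hH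
  refine ⟨?_, ?_, ?_⟩
  · calc Subgroup.map (MulAut.conj l).toMonoidHom H
        ≤ Subgroup.map (MulAut.conj l).toMonoidHom K := Subgroup.map_mono hHK
      _ = K := map_conj_eq hl
  · rw [← Subgroup.map_equiv_normalizer_eq H (MulAut.conj l)]
    intro k hk
    have hl' : l⁻¹ ∈ (Subgroup.normalizer (SetLike.coe K)) := (Subgroup.normalizer (SetLike.coe K)).inv_mem hl
    have hk' : l⁻¹ * k * l ∈ K := by
      have := (Subgroup.mem_normalizer_iff.mp hl' k).mp hk
      simpa using this
    refine ⟨l⁻¹ * k * l, hKn hk', ?_⟩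
    simp [MulAut.conj_apply]
    group
  · have : Nat.card (Subgroup.map (MulAut.conj l).toMonoidHom H) = Nat.card H :=
      (Nat.card_congr (Subgroup.equivMapOfInjective H _ (MulAut.conj l).injective).toEquiv).symm
    rw [this]; exact hc

theorem normalizer_sCore (h1 : cond 1) (hmul : ∀ a b d, cond a → cond b → d ∣ a * b → cond d) :
    (Subgroup.normalizer (SetLike.coe K)) ≤ (Subgroup.normalizer (SetLike.coe (sCore cond K))) := by
  intro l hl
  apply mem_normalizer_of_map_conj
  have himg : Subgroup.map (MulAut.conj l).toMonoidHom '' (goodSet cond K) = goodSet cond K := by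
    apply Set.Subset.antisymm
    · rintro _ ⟨H, hH, rfl⟩
      exact conj_mem_goodSet hmul hl hH
    · intro H hH
      refine ⟨Subgroup.map (MulAut.conj l⁻¹).toMonoidHom H,
        conj_mem_goodSet hmul ((Subgroup.normalizer (SetLike.coe K)).inv_mem hl) hH, ?_⟩
      rw [Subgroup.map_map]
      have : ((MulAut.conj l).toMonoidHom.comp (MulAut.conj l⁻¹).toMonoidHom) =
          MonoidHom.id Y := by
        ext x; simp [MulAut.conj_apply]; group
      rw [this, Subgroup.map_id]
  calc Subgroup.map (MulAut.conj l).toMonoidHom (sCore cond K)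
      = sSup (Subgroup.map (MulAut.conj l).toMonoidHom '' (goodSet cond K)) := by
        rw [sCore, sSup_image]
        exact (Subgroup.gc_map_comap _).l_sSup
    _ = sCore cond K := by rw [himg]; rfl

theorem chain_le_sCore (h1 : cond 1) (hmul : ∀ a b d, cond a → cond b → d ∣ a * b → cond d)
    (t : ℕ → Subgroup Y) (hmono : ∀ i, t i ≤ t (i + 1))
    (hnorm : ∀ i, t (i + 1) ≤ (Subgroup.normalizer (SetLike.coe (t i))))
    (a : ℕ) (h0 : cond (Nat.card (t a))) :
    ∀ m, t a ≤ sCore cond (t (a + m)) := by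
  intro m
  induction m with
  | zero => exact le_sSup ⟨le_rfl, Subgroup.le_normalizer, h0⟩
  | succ m ih =>
    have hWmem : sCore cond (t (a + m)) ∈ goodSet cond (t (a + m)) := sCore_mem h1 hmul
    refine le_trans ih (le_sSup ?_)
    refine ⟨hWmem.1.trans (hmono _), ?_, hWmem.2.2⟩
    exact le_trans (hnorm (a + m)) (normalizer_sCore h1 hmul)
  
end PSolv

namespace PSolv

theorem relIndex_map_dvd {G Q : Type*} [Group G] [Group Q] [Finite G] (f : G →* Q)
    {A B : Subgroup G} (hAB : A ≤ B) (hN : (A.subgroupOf B).Normal) :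
    (A.map f).relIndex (B.map f) ∣ A.relIndex B := by
  haveI hN' : ((A.map f).subgroupOf (B.map f)).Normal := by
    rw [Subgroup.normal_subgroupOf_iff (Subgroup.map_mono hAB)]
    rintro h k ⟨a, ha, rfl⟩ ⟨b, hb, rfl⟩
    exact ⟨b * a * b⁻¹,
      (Subgroup.normal_subgroupOf_iff hAB).mp hN a b ha hb, by simp⟩
  let g : ↥B →* ↥(B.map f) := f.subgroupMap B
  let ψ : ↥B →* (↥(B.map f) ⧸ (A.map f).subgroupOf (B.map f)) :=
    (QuotientGroup.mk' _).comp g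
  have hψ : Function.Surjective ψ :=
    (QuotientGroup.mk'_surjective _).comp (f.subgroupMap_surjective B)
  have hker : A.subgroupOf B ≤ ψ.ker := by
    intro x hx
    rw [MonoidHom.mem_ker]
    show QuotientGroup.mk (g x) = 1
    rw [QuotientGroup.eq_one_iff]
    exact ⟨(x : G), hx, rfl⟩
  have h1 : (A.map f).relIndex (B.map f) = ψ.ker.index := by
    show ((A.map f).subgroupOf (B.map f)).index = _
    rw [Subgroup.index_eq_card, Subgroup.index_eq_card]
    exact Nat.card_congr (QuotientGroup.quotientKerEquivOfSurjective ψ hψ).toEquiv.symm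
  rw [h1]
  exact Subgroup.index_dvd_of_le hker

theorem exists_minNormal_le {Q : Type*} [Group Q] [Finite Q] {W : Subgroup Q}
    (hW : W.Normal) (hWbot : W ≠ ⊥) : ∃ X : Subgroup Q, IsMinNormal X ∧ X ≤ W := by
  have hwf : WellFounded ((· < ·) : Subgroup Q → Subgroup Q → Prop) :=
    (Finite.to_wellFoundedLT).wf
  obtain ⟨X, ⟨hXn, hXb, hXW⟩, hmin⟩ :=
    hwf.has_min {K : Subgroup Q | K.Normal ∧ K ≠ ⊥ ∧ K ≤ W} ⟨W, hW, hWbot, le_rfl⟩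
  refine ⟨X, ⟨hXb, hXn, ?_⟩, hXW⟩
  intro Z hZn hZX
  by_cases hZ : Z = ⊥
  · exact Or.inl hZ
  · right
    by_contra hne
    exact hmin Z ⟨hZn, hZ, hZX.trans hXW⟩ (lt_of_le_of_ne hZX hne)

theorem card_eq_of_sup_eq_top {Q : Type*} [Group Q] [Finite Q] {X M' : Subgroup Q}
    [hX : X.Normal] (h : M' ⊔ X = ⊤) :
    Nat.card X = Nat.card ↥(X ⊓ M') * M'.index := by
  have hrel : X.relIndex M' = X.index := by
    have h2 : X.relIndex M' = Nat.card (↥(M' ⊔ X) ⧸ X.subgroupOf (M' ⊔ X)) := by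
      rw [Subgroup.relIndex, Subgroup.index_eq_card]
      exact Nat.card_congr (QuotientGroup.quotientInfEquivProdNormalQuotient M' X).toEquiv
    rw [h2, h]
    have h3 := Subgroup.relIndex_top_right (H := X)
    rw [Subgroup.relIndex, Subgroup.index_eq_card] at h3
    exact h3
  have h1 : Nat.card (X.subgroupOf M') * X.relIndex M' = Nat.card M' :=
    Subgroup.card_mul_index _
  have h2 : Nat.card X * X.index = Nat.card Q := Subgroup.card_mul_index _
  have h3 : Nat.card M' * M'.index = Nat.card Q := Subgroup.card_mul_index _
  have hcsub : Nat.card (X.subgroupOf M') = Nat.card ↥(X ⊓ M') := by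
    rw [← Subgroup.inf_subgroupOf_right]
    exact Nat.card_congr (Subgroup.subgroupOfEquivOfLe inf_le_right).toEquiv
  have hXpos : X.index ≠ 0 := Subgroup.index_ne_zero_of_finite
  apply Nat.eq_of_mul_eq_mul_right (Nat.pos_of_ne_zero hXpos)
  calc Nat.card X * X.index = Nat.card Q := h2
    _ = Nat.card M' * M'.index := h3.symm
    _ = (Nat.card (X.subgroupOf M') * X.relIndex M') * M'.index := by rw [h1]
    _ = (Nat.card ↥(X ⊓ M') * X.index) * M'.index := by rw [hcsub, hrel]
    _ = Nat.card ↥(X ⊓ M') * M'.index * X.index := by ring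

end PSolv

namespace PSolv

theorem exists_normal_good {G Q : Type*} [Group G] [Finite G] [Group Q] [Nontrivial Q]
    (f : G →* Q) (hf : Function.Surjective f) {p : ℕ} (hp : p.Prime)
    (hps : IsPSolvable p G) :
    ∃ W : Subgroup Q, W.Normal ∧ W ≠ ⊥ ∧
      ((∃ k, Nat.card W = p ^ k) ∨ ¬ p ∣ Nat.card W) := by
  haveI : Finite Q := Finite.of_surjective f hf
  classical
  obtain ⟨n, s, hbot, htop, hmono, hnormal, hfac⟩ := hps
  set t : ℕ → Subgroup Q := fun j => (s ⟨min j n, by omega⟩).map f with ht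
  have htj : ∀ j, n ≤ j → t j = ⊤ := by
    intro j hj
    have e : (⟨min j n, by omega⟩ : Fin (n+1)) = Fin.last n := by
      apply Fin.ext; simp [Fin.last]; omega
    show (s ⟨min j n, by omega⟩).map f = ⊤
    rw [e, htop, Subgroup.map_top_of_surjective f hf]
  have ht0 : t 0 = ⊥ := by
    have e : (⟨min 0 n, by omega⟩ : Fin (n+1)) = 0 := by apply Fin.ext; simp
    show (s ⟨min 0 n, by omega⟩).map f = ⊥
    rw [e, hbot, Subgroup.map_bot]
  have hmono' : ∀ i, t i ≤ t (i + 1) := by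
    intro i
    rcases lt_or_ge i n with hi | hi
    · have e1 : (⟨min i n, by omega⟩ : Fin (n+1)) = (⟨i, hi⟩ : Fin n).castSucc := by
        apply Fin.ext; simp; omega
      have e2 : (⟨min (i+1) n, by omega⟩ : Fin (n+1)) = (⟨i, hi⟩ : Fin n).succ := by
        apply Fin.ext; simp; omega
      show (s ⟨min i n, by omega⟩).map f ≤ (s ⟨min (i+1) n, by omega⟩).map f
      rw [e1, e2]
      exact Subgroup.map_mono (hmono ⟨i, hi⟩)
    · rw [htj i hi, htj (i+1) (by omega)]
  have hnorm' : ∀ i, t (i + 1) ≤ (Subgroup.normalizer (SetLike.coe (t i))) := by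
    intro i
    rcases lt_or_ge i n with hi | hi
    · have e1 : (⟨min i n, by omega⟩ : Fin (n+1)) = (⟨i, hi⟩ : Fin n).castSucc := by
        apply Fin.ext; simp; omega
      have e2 : (⟨min (i+1) n, by omega⟩ : Fin (n+1)) = (⟨i, hi⟩ : Fin n).succ := by
        apply Fin.ext; simp; omega
      show (s ⟨min (i+1) n, by omega⟩).map f ≤ (Subgroup.normalizer (SetLike.coe ((s ⟨min i n, by omega⟩).map f)))
      rw [e1, e2]
      haveI := hnormal ⟨i, hi⟩
      have h5 : s (⟨i, hi⟩ : Fin n).succ ≤ (Subgroup.normalizer (SetLike.coe (s (⟨i, hi⟩ : Fin n).castSucc))) :=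
        Subgroup.le_normalizer_of_normal_subgroupOf (hmono ⟨i, hi⟩)
      calc (s (⟨i, hi⟩ : Fin n).succ).map f
          ≤ ((Subgroup.normalizer (SetLike.coe (s (⟨i, hi⟩ : Fin n).castSucc)))).map f := Subgroup.map_mono h5
        _ ≤ (Subgroup.normalizer (SetLike.coe ((s (⟨i, hi⟩ : Fin n).castSucc).map f))) := Subgroup.le_normalizer_map f
    · rw [htj i hi, htj (i+1) (by omega)]
      exact Subgroup.le_normalizer
  have hfac' : ∀ i, (∃ k, (t i).relIndex (t (i+1)) = p ^ k) ∨ ¬ p ∣ (t i).relIndex (t (i+1)) := by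
    intro i
    rcases lt_or_ge i n with hi | hi
    · have e1 : (⟨min i n, by omega⟩ : Fin (n+1)) = (⟨i, hi⟩ : Fin n).castSucc := by
        apply Fin.ext; simp; omega
      have e2 : (⟨min (i+1) n, by omega⟩ : Fin (n+1)) = (⟨i, hi⟩ : Fin n).succ := by
        apply Fin.ext; simp; omega
      show (∃ k, ((s ⟨min i n, by omega⟩).map f).relIndex ((s ⟨min (i+1) n, by omega⟩).map f) = p ^ k) ∨
        ¬ p ∣ ((s ⟨min i n, by omega⟩).map f).relIndex ((s ⟨min (i+1) n, by omega⟩).map f)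
      rw [e1, e2]
      have hdvd := relIndex_map_dvd (hN := hnormal ⟨i, hi⟩) f (hmono ⟨i, hi⟩)
      rcases hfac ⟨i, hi⟩ with ⟨k, hk⟩ | hnd
      · rw [hk] at hdvd
        obtain ⟨k', _, hk'⟩ := (Nat.dvd_prime_pow hp).mp hdvd
        exact Or.inl ⟨k', hk'⟩
      · exact Or.inr fun hpd => hnd (hpd.trans hdvd)
    · rw [htj i hi, htj (i+1) (by omega), Subgroup.relIndex_self]
      exact Or.inl ⟨0, (pow_zero p).symm⟩
  have hex : ∃ j, t j ≠ ⊥ := ⟨n, by rw [htj n le_rfl]; exact top_ne_bot⟩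
  set i0 := Nat.find hex with hi0def
  have hi0 : t i0 ≠ ⊥ := Nat.find_spec hex
  have hi0pos : 0 < i0 := by
    rcases Nat.eq_zero_or_pos i0 with h | h
    · exact absurd (h ▸ ht0) hi0
    · exact h
  have hprev : t (i0 - 1) = ⊥ := by
    by_contra hne
    exact Nat.find_min hex (by omega) hne
  have hcard : (∃ k, Nat.card (t i0) = p ^ k) ∨ ¬ p ∣ Nat.card (t i0) := by
    have := hfac' (i0 - 1)
    rw [show i0 - 1 + 1 = i0 by omega, hprev, Subgroup.relIndex_bot_left] at this
    exact this
  have htop' : t (i0 + n) = ⊤ := htj _ (by omega)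
  rcases hcard with hcond0 | hcond0
  · set cond : ℕ → Prop := fun d => ∃ k, d = p ^ k with hcond
    have h1 : cond 1 := ⟨0, (pow_zero p).symm⟩
    have hmul : ∀ a b d, cond a → cond b → d ∣ a * b → cond d := by
      rintro a b d ⟨i, rfl⟩ ⟨j, rfl⟩ hd
      rw [← pow_add] at hd
      obtain ⟨k, _, hk⟩ := (Nat.dvd_prime_pow hp).mp hd
      exact ⟨k, hk⟩
    have hchain := chain_le_sCore h1 hmul t hmono' hnorm' i0 hcond0 n
    rw [htop'] at hchain
    have hWmem := sCore_mem (K := (⊤ : Subgroup Q)) h1 hmul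
    refine ⟨sCore cond ⊤, ?_, ?_, Or.inl hWmem.2.2⟩
    · exact Subgroup.normalizer_eq_top_iff.mp (le_antisymm le_top hWmem.2.1)
    · intro hWbot
      rw [hWbot, le_bot_iff] at hchain
      exact hi0 hchain
  · set cond : ℕ → Prop := fun d => ¬ p ∣ d with hcond
    have h1 : cond 1 := fun hdvd => hp.one_lt.ne' (Nat.dvd_one.mp hdvd)
    have hmul : ∀ a b d, cond a → cond b → d ∣ a * b → cond d := by
      intro a b d ha hb hd hpd
      exact ((Nat.Prime.dvd_mul hp).mp (hpd.trans hd)).elim ha hb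
    have hchain := chain_le_sCore h1 hmul t hmono' hnorm' i0 hcond0 n
    rw [htop'] at hchain
    have hWmem := sCore_mem (K := (⊤ : Subgroup Q)) h1 hmul
    refine ⟨sCore cond ⊤, ?_, ?_, Or.inr hWmem.2.2⟩
    · exact Subgroup.normalizer_eq_top_iff.mp (le_antisymm le_top hWmem.2.1)
    · intro hWbot
      rw [hWbot, le_bot_iff] at hchain
      exact hi0 hchain

end PSolv

open PSolv Subgroup in
theorem stmt7 {G : Type*} [Group G] [Finite G] (p : ℕ) (hp : p.Prime)
    (M : Subgroup G) (hM : IsCoatom M) (hdvd : p ∣ M.index)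
    (hps : IsPSolvable p G) :
    ∃ X : Subgroup (G ⧸ M.normalCore),
      IsMinNormal X ∧ (∀ Y : Subgroup (G ⧸ M.normalCore), IsMinNormal Y → Y = X) ∧
      IsPGroup p X ∧ (∀ a b : X, a * b = b * a) ∧ (∀ a : X, a ^ p = 1) ∧
      Subgroup.centralizer (X : Set (G ⧸ M.normalCore)) = X ∧
      (M : Set G) *
        ((Subgroup.centralizer (X : Set (G ⧸ M.normalCore))).comap
          (QuotientGroup.mk' M.normalCore) : Subgroup G) = (Set.univ : Set G) ∧
      M ⊓ (Subgroup.centralizer (X : Set (G ⧸ M.normalCore))).comap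
          (QuotientGroup.mk' M.normalCore) = M.normalCore ∧
      M.index = Nat.card X ∧ ∃ k : ℕ, Nat.card X = p ^ k := by

  classical
  haveI : Fact p.Prime := ⟨hp⟩
  set f := QuotientGroup.mk' M.normalCore with hfdef
  have hfsurj : Function.Surjective f := QuotientGroup.mk'_surjective _
  haveI : Finite (G ⧸ M.normalCore) := Quotient.finite _
  have hker : f.ker = M.normalCore := QuotientGroup.ker_mk' _
  have hNle : M.normalCore ≤ M := M.normalCore_le
  have hMneTop : M ≠ ⊤ := hM.1
  obtain ⟨g0, hg0⟩ : ∃ g0, g0 ∉ M := by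
    by_contra h
    push_neg at h
    exact hMneTop (top_unique (fun x _ => h x))
  haveI : Nontrivial (G ⧸ M.normalCore) := by
    refine ⟨⟨f g0, 1, fun h => hg0 ?_⟩⟩
    have h2 : g0 ∈ f.ker := MonoidHom.mem_ker.mpr h
    rw [hker] at h2
    exact hNle h2
  set M' := M.map f with hM'def
  have hcomap : M'.comap f = M := by
    rw [hM'def, Subgroup.comap_map_eq, hker, sup_of_le_left hNle]
  have hcore : M'.normalCore = ⊥ := by
    have h1 : (M'.normalCore).comap f ≤ M :=
      le_trans (Subgroup.comap_mono M'.normalCore_le) (le_of_eq hcomap)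
    have h2 : (M'.normalCore).comap f ≤ M.normalCore :=
      Subgroup.normal_le_normalCore.mpr h1
    have h3 : M'.normalCore = ((M'.normalCore).comap f).map f :=
      (Subgroup.map_comap_eq_self_of_surjective hfsurj _).symm
    rw [h3]
    refine le_bot_iff.mp ?_
    rintro x ⟨g, hg, rfl⟩
    have h4 : g ∈ f.ker := by rw [hker]; exact h2 hg
    simpa using MonoidHom.mem_ker.mp h4
  have hidx : M'.index = M.index := by
    have h5 := Subgroup.index_comap_of_surjective M' hfsurj
    rw [hcomap] at h5
    exact h5.symm
  have hsup : ∀ T : Subgroup (G ⧸ M.normalCore), T.Normal → T ≠ ⊥ → M' ⊔ T = ⊤ := by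
    intro T hTn hTb
    have hTM : ¬ T ≤ M' := by
      intro hle
      haveI := hTn
      exact hTb (le_bot_iff.mp (hcore ▸ Subgroup.normal_le_normalCore.mpr hle))
    have hsub : M ≤ (M' ⊔ T).comap f :=
      le_trans (le_of_eq hcomap.symm) (Subgroup.comap_mono le_sup_left)
    rcases hsub.lt_or_eq with hlt | heq
    · have htop : (M' ⊔ T).comap f = ⊤ := hM.2 _ hlt
      have h5 : M' ⊔ T = Subgroup.map f ((M' ⊔ T).comap f) :=
        (Subgroup.map_comap_eq_self_of_surjective hfsurj _).symm
      rw [h5, htop, Subgroup.map_top_of_surjective f hfsurj]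
    · exfalso
      apply hTM
      calc T = Subgroup.map f (T.comap f) :=
            (Subgroup.map_comap_eq_self_of_surjective hfsurj _).symm
        _ ≤ Subgroup.map f ((M' ⊔ T).comap f) :=
            Subgroup.map_mono (Subgroup.comap_mono le_sup_right)
        _ = Subgroup.map f M := by rw [← heq]
        _ = M' := rfl
  obtain ⟨W, hWn, hWb, hWcond⟩ := exists_normal_good f hfsurj hp hps
  obtain ⟨X, hXmin, hXW⟩ := exists_minNormal_le hWn hWb
  obtain ⟨hXb, hXn, hmin⟩ := hXmin
  haveI := hXn
  have hsupX : M' ⊔ X = ⊤ := hsup X hXn hXb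
  have hcardE : Nat.card X = Nat.card ↥(X ⊓ M') * M'.index := card_eq_of_sup_eq_top hsupX
  have hpX : p ∣ Nat.card X := by
    rw [hcardE, hidx]
    exact Dvd.dvd.mul_left hdvd _
  have hXp : IsPGroup p ↥X := by
    rcases hWcond with ⟨k, hk⟩ | hk
    · obtain ⟨j, _, hj⟩ := (Nat.dvd_prime_pow hp).mp (hk ▸ Subgroup.card_dvd_of_le hXW)
      exact IsPGroup.of_card hj
    · exact absurd (hpX.trans (Subgroup.card_dvd_of_le hXW)) hk
  have hCn : (Subgroup.centralizer (X : Set (G ⧸ M.normalCore))).Normal := by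
    constructor
    intro c hc g
    rw [Subgroup.mem_centralizer_iff] at hc ⊢
    intro x hx
    have hx' : g⁻¹ * x * g ∈ X := by
      have h6 := hXn.conj_mem x hx g⁻¹
      simpa using h6
    have h7 := hc _ hx'
    have h8 := congrArg (fun z => g * z * g⁻¹) h7
    simp only [mul_assoc] at h8 ⊢
    simpa [mul_assoc] using h8
  haveI : Nontrivial ↥X := (Subgroup.nontrivial_iff_ne_bot X).mpr hXb
  have hZ : Subgroup.centralizer (X : Set (G ⧸ M.normalCore)) ⊓ X ≠ ⊥ := by
    haveI hcnt := IsPGroup.center_nontrivial hXp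
    obtain ⟨z, hz1⟩ := exists_ne (1 : Subgroup.center ↥X)
    intro hbot
    apply hz1
    have hmemX : ((z : ↥X) : G ⧸ M.normalCore) ∈ X := (z : ↥X).2
    have hmemC : ((z : ↥X) : G ⧸ M.normalCore) ∈
        Subgroup.centralizer (X : Set (G ⧸ M.normalCore)) := by
      rw [Subgroup.mem_centralizer_iff]
      intro y hy
      exact congrArg Subtype.val (Subgroup.mem_center_iff.mp z.2 ⟨y, hy⟩)
    have h9 : ((z : ↥X) : G ⧸ M.normalCore) ∈
        Subgroup.centralizer (X : Set (G ⧸ M.normalCore)) ⊓ X := ⟨hmemC, hmemX⟩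
    rw [hbot] at h9
    have e1 : ((z : ↥X) : G ⧸ M.normalCore) = 1 := Subgroup.mem_bot.mp h9
    have e2 : (z : ↥X) = 1 := Subtype.ext e1
    exact Subtype.ext e2
  have hZX : Subgroup.centralizer (X : Set (G ⧸ M.normalCore)) ⊓ X = X := by
    have hZn : (Subgroup.centralizer (X : Set (G ⧸ M.normalCore)) ⊓ X).Normal :=
      ⟨fun z hz g => ⟨hCn.conj_mem _ hz.1 g, hXn.conj_mem _ hz.2 g⟩⟩
    exact (hmin _ hZn inf_le_right).resolve_left hZ
  have hXle : X ≤ Subgroup.centralizer (X : Set (G ⧸ M.normalCore)) := by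
    intro x hx
    rw [← hZX] at hx
    exact hx.1
  have hcommQ : ∀ x y : G ⧸ M.normalCore, x ∈ X → y ∈ X → x * y = y * x := fun x y hx hy =>
    Subgroup.mem_centralizer_iff.mp (hXle hy) x hx
  have hcomm : ∀ a b : ↥X, a * b = b * a := fun a b =>
    Subtype.ext (hcommQ _ _ a.2 b.2)
  set Om : Subgroup (G ⧸ M.normalCore) :=
    { carrier := {x | x ∈ X ∧ x ^ p = 1}
      one_mem' := ⟨X.one_mem, one_pow p⟩
      mul_mem' := by
        rintro a b ⟨ha, hap⟩ ⟨hb, hbp⟩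
        refine ⟨X.mul_mem ha hb, ?_⟩
        have hc : Commute a b := hcommQ a b ha hb
        rw [hc.mul_pow, hap, hbp, one_mul]
      inv_mem' := by
        rintro a ⟨ha, hap⟩
        exact ⟨X.inv_mem ha, by rw [inv_pow, hap, inv_one]⟩ } with hOmdef
  have hOmn : Om.Normal := by
    constructor
    rintro x ⟨hx, hxp⟩ g
    refine ⟨hXn.conj_mem x hx g, ?_⟩
    have e : g * x * g⁻¹ = (MulAut.conj g) x := rfl
    rw [e, ← map_pow, hxp, map_one]
  have hOmb : Om ≠ ⊥ := by
    obtain ⟨a, ha1⟩ := exists_ne (1 : ↥X)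
    obtain ⟨k, hk⟩ := hXp a
    have hdvd' : orderOf a ∣ p ^ k := orderOf_dvd_of_pow_eq_one hk
    obtain ⟨j, hjk, hj⟩ := (Nat.dvd_prime_pow hp).mp hdvd'
    have hj0 : j ≠ 0 := by
      intro h
      rw [h, pow_zero] at hj
      exact ha1 (orderOf_eq_one_iff.mp hj)
    set b := a ^ (p ^ (j - 1)) with hbdef
    have hbp : b ^ p = 1 := by
      rw [hbdef, ← pow_mul, ← pow_succ, show j - 1 + 1 = j by omega, ← hj,
        pow_orderOf_eq_one]
    have hbne : b ≠ 1 := by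
      intro h
      have h10 : orderOf a ∣ p ^ (j - 1) := orderOf_dvd_of_pow_eq_one h
      rw [hj] at h10
      have := (Nat.pow_dvd_pow_iff_le_right hp.one_lt).mp h10
      omega
    intro h
    apply hbne
    have hmem : (↑b : G ⧸ M.normalCore) ∈ Om :=
      ⟨b.2, by have := congrArg Subtype.val hbp; simpa using this⟩
    rw [h] at hmem
    exact Subtype.ext (Subgroup.mem_bot.mp hmem)
  have hOmX : Om = X :=
    (hmin Om hOmn (fun x hx => hx.1)).resolve_left hOmb
  have hexp : ∀ a : ↥X, a ^ p = 1 := by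
    intro a
    have h11 : (↑a : G ⧸ M.normalCore) ∈ Om := hOmX.symm ▸ a.2
    exact Subtype.ext (by simpa using h11.2)
  have hDbot : Subgroup.centralizer (X : Set (G ⧸ M.normalCore)) ⊓ M' = ⊥ := by
    set D := Subgroup.centralizer (X : Set (G ⧸ M.normalCore)) ⊓ M' with hDdef
    have hconjM : ∀ x ∈ M', ∀ d ∈ D, x * d * x⁻¹ ∈ D := by
      intro x hx d hd
      exact ⟨hCn.conj_mem d hd.1 x, M'.mul_mem (M'.mul_mem hx hd.2) (M'.inv_mem hx)⟩
    have hconjX : ∀ x ∈ X, ∀ d ∈ D, x * d * x⁻¹ ∈ D := by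
      intro x hx d hd
      have h12 : x * d = d * x := Subgroup.mem_centralizer_iff.mp hd.1 x hx
      have e : x * d * x⁻¹ = d := by rw [h12]; group
      rw [e]; exact hd
    have key : ∀ g ∈ M' ⊔ X, ∀ d, d ∈ D ↔ g * d * g⁻¹ ∈ D := by
      intro g hg
      rw [Subgroup.sup_eq_closure] at hg
      induction hg using Subgroup.closure_induction with
      | mem x hx =>
        intro d
        constructor
        · intro hd
          rcases hx with hx | hx
          · exact hconjM x hx d hd
          · exact hconjX x hx d hd
        · intro hd
          have e : x⁻¹ * (x * d * x⁻¹) * x⁻¹⁻¹ = d := by group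
          rcases hx with hx | hx
          · have h13 := hconjM x⁻¹ (M'.inv_mem hx) _ hd
            rwa [e] at h13
          · have h13 := hconjX x⁻¹ (X.inv_mem hx) _ hd
            rwa [e] at h13
      | one => intro d; simp
      | mul x y hxm hym hx hy =>
        intro d
        have e : x * (y * d * y⁻¹) * x⁻¹ = (x * y) * d * (x * y)⁻¹ := by group
        rw [hy d, hx (y * d * y⁻¹), e]
      | inv x hxm hx =>
        intro d
        have e : x * (x⁻¹ * d * x⁻¹⁻¹) * x⁻¹ = d := by group
        have h14 := hx (x⁻¹ * d * x⁻¹⁻¹)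
        rw [e] at h14
        exact h14.symm
    have hDn : D.Normal := by
      constructor
      intro d hd g
      exact (key g (by rw [hsupX]; trivial) d).mp hd
    haveI := hDn
    have h15 : D ≤ M'.normalCore := Subgroup.normal_le_normalCore.mpr inf_le_right
    rw [hcore] at h15
    exact le_bot_iff.mp h15
  have hCX : Subgroup.centralizer (X : Set (G ⧸ M.normalCore)) = X := by
    refine le_antisymm ?_ hXle
    intro c hc
    have hc' : c ∈ ((M' ⊔ X : Subgroup (G ⧸ M.normalCore)) : Set (G ⧸ M.normalCore)) := by
      rw [hsupX]; trivial
    rw [Subgroup.mul_normal] at hc'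
    obtain ⟨m, hm, x, hx, rfl⟩ := hc'
    have hm2 : m ∈ M' := hm
    have hx2 : x ∈ X := hx
    have hc2 : m * x ∈ Subgroup.centralizer (X : Set (G ⧸ M.normalCore)) := hc
    have hmD : m ∈ Subgroup.centralizer (X : Set (G ⧸ M.normalCore)) ⊓ M' := by
      refine ⟨?_, hm2⟩
      have e : m = (m * x) * x⁻¹ := by group
      rw [e]
      exact Subgroup.mul_mem _ hc2 (Subgroup.inv_mem _ (hXle hx2))
    have hm1 : m = 1 := Subgroup.mem_bot.mp (by rw [← hDbot]; exact hmD)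
    show m * x ∈ X
    rw [hm1, one_mul]
    exact hx2
  have hXM'bot : X ⊓ M' = ⊥ := by
    refine le_bot_iff.mp ?_
    intro z hz
    rw [← hDbot]
    exact ⟨hXle hz.1, hz.2⟩
  have hindex : M.index = Nat.card X := by
    rw [hcardE, hXM'bot, Subgroup.card_bot, one_mul, hidx]
  have huniq : ∀ Y : Subgroup (G ⧸ M.normalCore), IsMinNormal Y → Y = X := by
    rintro Y ⟨hYb, hYn, hYmin⟩
    have hYXn : (Y ⊓ X).Normal :=
      ⟨fun z hz g => ⟨hYn.conj_mem _ hz.1 g, hXn.conj_mem _ hz.2 g⟩⟩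
    rcases hmin (Y ⊓ X) hYXn inf_le_right with h | h
    · exfalso
      have hYC : Y ≤ Subgroup.centralizer (X : Set (G ⧸ M.normalCore)) := by
        intro y hy
        rw [Subgroup.mem_centralizer_iff]
        intro x hx
        exact (Subgroup.commute_of_normal_of_disjoint Y X hYn hXn
          (disjoint_iff.mpr h) y x hy hx).eq.symm
      rw [hCX] at hYC
      have h16 : Y ⊓ X = Y := inf_eq_left.mpr hYC
      rw [h] at h16
      exact hYb h16.symm
    · have hXY : X ≤ Y := by
        intro x hx
        rw [← h] at hx
        exact hx.1
      rcases hYmin X hXn hXY with h17 | h17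
      · exact absurd h17 hXb
      · exact h17.symm
  refine ⟨X, ⟨hXb, hXn, hmin⟩, huniq, hXp, hcomm, hexp, hCX, ?_, ?_, hindex,
    IsPGroup.iff_card.mp hXp⟩
  · rw [hCX]
    apply Set.eq_univ_of_forall
    intro g
    have hg : f g ∈ ((M' ⊔ X : Subgroup (G ⧸ M.normalCore)) : Set (G ⧸ M.normalCore)) := by
      rw [hsupX]; trivial
    rw [Subgroup.mul_normal] at hg
    obtain ⟨m', hm', x, hx, hmx⟩ := hg
    have hx2 : x ∈ X := hx
    have hm2 : m' ∈ M' := hm'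
    rw [hM'def, Subgroup.mem_map] at hm2
    obtain ⟨m, hm, rfl⟩ := hm2
    refine Set.mem_mul.mpr ⟨m, hm, m⁻¹ * g, ?_, by group⟩
    have e : f (m⁻¹ * g) = x := by
      rw [map_mul, map_inv, ← hmx]
      group
    show m⁻¹ * g ∈ (X.comap f : Subgroup G)
    rw [Subgroup.mem_comap, e]
    exact hx2
  · rw [hCX]
    ext g
    simp only [Subgroup.mem_inf, Subgroup.mem_comap]
    constructor
    · rintro ⟨hgM, hgX⟩
      have h18 : f g ∈ X ⊓ M' := ⟨hgX, Subgroup.mem_map_of_mem f hgM⟩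
      rw [hXM'bot] at h18
      have h19 : g ∈ f.ker := MonoidHom.mem_ker.mpr (Subgroup.mem_bot.mp h18)
      rwa [hker] at h19
    · intro hg
      refine ⟨hNle hg, ?_⟩
      have h20 : f g = 1 := MonoidHom.mem_ker.mp (by rw [hker]; exact hg)
      rw [h20]
      exact X.one_mem
end

section
/- Let M be a maximal subgroup of a finite group G such that G is p-solvable for a prime p dividing |G:M|, and let K/L be a chief factor of G. Then exactly one of the following holds: (1) M covers K/L; or (2) M avoids K/L, K/L is abelian, and K/L is isomorphic to X_M as G-modules (G acting by conjugation). Moreover, in any chief series of G, M avoids exactly one factor and covers all other factors. -/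
open scoped Pointwise

/-- `X ≤ G/A` and `Y ≤ G/B` are isomorphic as `G`-modules (`G` acting by
conjugation through the respective quotients). -/
def ConjIso {G : Type*} [Group G] {A B : Subgroup G} [A.Normal] [B.Normal]
    (X : Subgroup (G ⧸ A)) (Y : Subgroup (G ⧸ B)) : Prop :=
  ∃ e : X ≃* Y, ∀ (g : G) (x x' : X),
    (x' : G ⧸ A) = QuotientGroup.mk g * (x : G ⧸ A) * (QuotientGroup.mk g)⁻¹ →
    ((e x' : Y) : G ⧸ B) = QuotientGroup.mk g * ((e x : Y) : G ⧸ B) * (QuotientGroup.mk g)⁻¹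

section A
variable {G : Type*} [Group G]

lemma mem_mul_of_mem_sup {L M : Subgroup G} [L.Normal] {x : G} (hx : x ∈ L ⊔ M) :
    ∃ l ∈ L, ∃ m ∈ M, x = l * m := by
  have h := Subgroup.normal_mul L M
  have hx' : x ∈ (↑L * ↑M : Set G) := h ▸ hx
  obtain ⟨l, hl, m, hm, h⟩ := hx'
  exact ⟨l, hl, m, hm, h.symm⟩

lemma cover_of_le {L M K : Subgroup G} [L.Normal] (hLK : L ≤ K) (h : K ≤ L ⊔ M) :
    (K : Set G) = (L : Set G) * ((M ⊓ K : Subgroup G) : Set G) := by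
  ext x
  constructor
  · intro hx
    obtain ⟨l, hl, m, hm, rfl⟩ := mem_mul_of_mem_sup (h hx)
    have hmK : m ∈ K := by
      have := K.mul_mem (K.inv_mem (hLK hl)) hx
      simpa using this
    exact ⟨l, hl, m, ⟨hm, hmK⟩, rfl⟩
  · rintro ⟨l, hl, m, hm, rfl⟩
    exact K.mul_mem (hLK hl) hm.2

lemma le_sup_of_cover {L M K : Subgroup G}
    (h : (K : Set G) = (L : Set G) * ((M ⊓ K : Subgroup G) : Set G)) : K ≤ L ⊔ M := by
  intro x hx
  have : x ∈ (L : Set G) * ((M ⊓ K : Subgroup G) : Set G) := h ▸ hx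
  obtain ⟨l, hl, m, hm, rfl⟩ := this
  exact Subgroup.mul_mem _ (le_sup_left (a := L) (b := M) hl) (le_sup_right (a := L) (b := M) hm.1)

lemma not_le_of_chief {L K : Subgroup G} [L.Normal]
    (hchief : IsMinNormal (K.map (QuotientGroup.mk' L))) : ¬ K ≤ L := by
  intro h
  exact hchief.1 ((Subgroup.map_eq_bot_iff _).2 (by simpa [QuotientGroup.ker_mk'] using h))

lemma chief_min {L K : Subgroup G} [L.Normal] (hLK : L ≤ K)
    (hchief : IsMinNormal (K.map (QuotientGroup.mk' L)))
    (T : Subgroup G) (hT : T.Normal) (hLT : L ≤ T) (hTK : T ≤ K) : T = L ∨ T = K := by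
  have hsurj := QuotientGroup.mk'_surjective L
  rcases hchief.2.2 (T.map (QuotientGroup.mk' L)) (hT.map _ hsurj)
      (Subgroup.map_mono hTK) with h | h
  · left
    exact le_antisymm (by simpa [QuotientGroup.ker_mk'] using (Subgroup.map_eq_bot_iff _).1 h) hLT
  · right
    have := congrArg (Subgroup.comap (QuotientGroup.mk' L)) h
    rwa [Subgroup.comap_map_eq, Subgroup.comap_map_eq, QuotientGroup.ker_mk',
      sup_eq_left.2 hLT, sup_eq_left.2 hLK] at this

end A

section OpIn
variable {Q : Type*} [Group Q]

/-- `N` is a candidate subgroup inside `B`: contained in `B`, invariant under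
conjugation by `B`, and all elements satisfy `E`. -/
def Qual (E : Q → Prop) (B N : Subgroup Q) : Prop :=
  N ≤ B ∧ (∀ b ∈ B, ∀ x ∈ N, b * x * b⁻¹ ∈ N) ∧ ∀ x ∈ N, E x

/-- The subgroup generated by all `Qual`-subgroups of `B`. -/
def OpIn (E : Q → Prop) (B : Subgroup Q) : Subgroup Q :=
  ⨆ N : {N : Subgroup Q // Qual E B N}, (N : Subgroup Q)

lemma le_opIn {E : Q → Prop} {B N : Subgroup Q} (h : Qual E B N) : N ≤ OpIn E B :=
  le_iSup (fun N : {N : Subgroup Q // Qual E B N} => (N : Subgroup Q)) ⟨N, h⟩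

lemma opIn_le {E : Q → Prop} {B : Subgroup Q} : OpIn E B ≤ B :=
  iSup_le fun N => N.2.1

/-- Conjugation-closedness hypothesis on `E`. -/
def EConj (E : Q → Prop) : Prop := ∀ (g x : Q), E x → E (g * x * g⁻¹)

/-- Closedness of elementwise-`E` subgroups under normalized joins. -/
def ESup (E : Q → Prop) : Prop := ∀ N₁ N₂ : Subgroup Q, N₁ ≤ Subgroup.normalizer (N₂ : Set Q) →
    (∀ x ∈ N₁, E x) → (∀ x ∈ N₂, E x) → ∀ x ∈ N₁ ⊔ N₂, E x

lemma qual_sup {E : Q → Prop} (hEsup : ESup E) {B N₁ N₂ : Subgroup Q}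
    (h₁ : Qual E B N₁) (h₂ : Qual E B N₂) : Qual E B (N₁ ⊔ N₂) := by
  have hnorm : N₁ ≤ Subgroup.normalizer (N₂ : Set Q) := by
    intro b hb
    rw [Subgroup.mem_normalizer_iff]
    intro h
    constructor
    · intro hh; exact h₂.2.1 b (h₁.1 hb) h hh
    · intro hh
      have := h₂.2.1 b⁻¹ (B.inv_mem (h₁.1 hb)) _ hh
      simpa [mul_assoc] using this
  refine ⟨sup_le h₁.1 h₂.1, ?_, hEsup N₁ N₂ hnorm h₁.2.2 h₂.2.2⟩
  intro b hb x hx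
  have key : N₁ ⊔ N₂ ≤ (N₁ ⊔ N₂).comap (MulAut.conj b).toMonoidHom := by
    refine sup_le ?_ ?_
    · intro z hz
      simpa [Subgroup.mem_comap, MulAut.conj_apply] using
        (le_sup_left (a := N₁) (b := N₂) (h₁.2.1 b hb z hz))
    · intro z hz
      simpa [Subgroup.mem_comap, MulAut.conj_apply] using
        (le_sup_right (a := N₁) (b := N₂) (h₂.2.1 b hb z hz))
  simpa [Subgroup.mem_comap, MulAut.conj_apply] using key hx

lemma opIn_mem {E : Q → Prop} (hE1 : E 1) (hEsup : ESup E) {B : Subgroup Q} {x : Q}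
    (hx : x ∈ OpIn E B) : ∃ N : Subgroup Q, Qual E B N ∧ x ∈ N := by
  refine Subgroup.iSup_induction _ (C := fun y => ∃ N : Subgroup Q, Qual E B N ∧ y ∈ N) hx
    (fun N y hy => ⟨N.1, N.2, hy⟩)
    ⟨⊥, ⟨bot_le, by simp, by intro x hx; rw [Subgroup.mem_bot] at hx; simpa [hx]⟩, by simp⟩ ?_
  rintro u v ⟨N₁, h₁, hu⟩ ⟨N₂, h₂, hv⟩
  exact ⟨N₁ ⊔ N₂, qual_sup hEsup h₁ h₂,
    Subgroup.mul_mem _ (le_sup_left (a := N₁) (b := N₂) hu) (le_sup_right (a := N₁) (b := N₂) hv)⟩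

lemma qual_opIn {E : Q → Prop} (hE1 : E 1) (hEsup : ESup E) {B : Subgroup Q} :
    Qual E B (OpIn E B) := by
  refine ⟨opIn_le, ?_, ?_⟩
  · intro b hb x hx
    obtain ⟨N, hN, hxN⟩ := opIn_mem hE1 hEsup hx
    exact le_opIn hN (hN.2.1 b hb x hxN)
  · intro x hx
    obtain ⟨N, hN, hxN⟩ := opIn_mem hE1 hEsup hx
    exact hN.2.2 x hxN

lemma opIn_step {E : Q → Prop} (hE1 : E 1) (hEconj : EConj E) (hEsup : ESup E)
    {A B : Subgroup Q} (hAB : A ≤ B)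
    (hinv : ∀ b ∈ B, ∀ x ∈ A, b * x * b⁻¹ ∈ A) : OpIn E A ≤ OpIn E B := by
  refine le_opIn ⟨(opIn_le : OpIn E A ≤ A).trans hAB, ?_, (qual_opIn hE1 hEsup).2.2⟩
  intro b hb x hx
  obtain ⟨N, hN, hxN⟩ := opIn_mem hE1 hEsup hx
  set N' : Subgroup Q := N.map ((MulAut.conj b).toMonoidHom) with hN'
  have hmem : ∀ y, y ∈ N' ↔ ∃ z ∈ N, b * z * b⁻¹ = y := by
    intro y
    simp [hN', Subgroup.mem_map, MulAut.conj_apply]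
  have hqual : Qual E A N' := by
    refine ⟨?_, ?_, ?_⟩
    · intro y hy
      obtain ⟨z, hz, rfl⟩ := (hmem y).1 hy
      exact hinv b hb z (hN.1 hz)
    · intro a ha y hy
      obtain ⟨z, hz, rfl⟩ := (hmem y).1 hy
      have haA : b⁻¹ * a * b ∈ A := by
        have := hinv b⁻¹ (B.inv_mem hb) a ha
        simpa [mul_assoc] using this
      refine (hmem _).2 ⟨(b⁻¹ * a * b) * z * (b⁻¹ * a * b)⁻¹, hN.2.1 _ haA z hz, ?_⟩
      group
    · intro y hy
      obtain ⟨z, hz, rfl⟩ := (hmem y).1 hy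
      exact hEconj b z (hN.2.2 z hz)
  exact le_opIn hqual ((hmem _).2 ⟨x, hxN, rfl⟩)

end OpIn

section Pi
variable {Q : Type*} [Group Q] [Finite Q] {p : ℕ}

lemma card_subgroupOf {X Y : Subgroup Q} (h : X ≤ Y) :
    Nat.card (X.subgroupOf Y) = Nat.card X :=
  Nat.card_congr (Subgroup.subgroupOfEquivOfLe h).toEquiv

lemma card_sup_dvd_s8 {A B : Subgroup Q} (hAB : A ≤ Subgroup.normalizer (B : Set Q)) :
    Nat.card (A ⊔ B : Subgroup Q) ∣ Nat.card A * Nat.card B := by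
  set N := Subgroup.normalizer (B : Set Q) with hN
  have hBN : B ≤ N := Subgroup.le_normalizer
  have hsupN : A ⊔ B ≤ N := sup_le hAB hBN
  have hsub : (A ⊔ B).subgroupOf N = A.subgroupOf N ⊔ B.subgroupOf N :=
    Subgroup.subgroupOf_sup hAB hBN
  haveI : (B.subgroupOf N).Normal := Subgroup.normal_in_normalizer
  set A₁ := A.subgroupOf N
  set B₁ := B.subgroupOf N
  have key : Nat.card (A₁ ⊔ B₁ : Subgroup N) ∣ Nat.card A₁ * Nat.card B₁ := by
    have h1 : (B₁.subgroupOf (A₁ ⊔ B₁)).index * Nat.card (B₁.subgroupOf (A₁ ⊔ B₁)) =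
        Nat.card (A₁ ⊔ B₁ : Subgroup N) := Subgroup.index_mul_card _
    have h2 : B₁.relIndex (A₁ ⊔ B₁) = B₁.relIndex A₁ := Subgroup.relIndex_sup_right A₁ B₁
    have h3 : B₁.relIndex (A₁ ⊔ B₁) ∣ Nat.card A₁ := by
      rw [h2]; exact Subgroup.index_dvd_card _
    have h4 : Nat.card (B₁.subgroupOf (A₁ ⊔ B₁)) = Nat.card B₁ :=
      card_subgroupOf (le_sup_right : B₁ ≤ A₁ ⊔ B₁)
    rw [← h1, h4]
    exact mul_dvd_mul h3 dvd_rfl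
  have e1 : Nat.card (A ⊔ B : Subgroup Q) = Nat.card (A₁ ⊔ B₁ : Subgroup N) := by
    rw [← hsub, card_subgroupOf hsupN]
  have e2 : Nat.card A₁ = Nat.card A := card_subgroupOf hAB
  have e3 : Nat.card B₁ = Nat.card B := card_subgroupOf hBN
  rw [e1, ← e2, ← e3]
  exact key

lemma not_dvd_card_of_forall (hp : p.Prime) {H : Subgroup Q}
    (h : ∀ x ∈ H, ¬ p ∣ orderOf x) : ¬ p ∣ Nat.card H := by
  haveI := Fact.mk hp
  intro hdvd
  obtain ⟨y, hy⟩ := exists_prime_orderOf_dvd_card' (G := H) p hdvd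
  exact h (y : Q) y.2 (by rw [Subgroup.orderOf_coe, hy])

lemma econj_p : EConj (Q := Q) (fun x => ∃ k, x ^ p ^ k = 1) := by
  intro g x ⟨k, hk⟩
  refine ⟨k, ?_⟩
  have : ((MulAut.conj g) x) ^ p ^ k = (MulAut.conj g) (x ^ p ^ k) := (map_pow _ _ _).symm
  simpa [MulAut.conj_apply, hk] using this

lemma econj_p' : EConj (Q := Q) (fun x => ¬ p ∣ orderOf x) := by
  intro g x hx
  have : orderOf ((MulAut.conj g) x) = orderOf x :=
    orderOf_injective (MulAut.conj g).toMonoidHom (MulEquiv.injective _) x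
  rw [MulAut.conj_apply] at this
  rw [this]
  exact hx

lemma elem_iff_isPGroup {H : Subgroup Q} :
    (∀ x ∈ H, ∃ k, x ^ p ^ k = 1) ↔ IsPGroup p H := by
  constructor
  · intro h g
    obtain ⟨k, hk⟩ := h (g : Q) g.2
    exact ⟨k, by ext; simpa using hk⟩
  · intro h x hx
    obtain ⟨k, hk⟩ := h ⟨x, hx⟩
    exact ⟨k, by simpa [Subtype.ext_iff] using hk⟩

lemma esup_p (hp : p.Prime) : ESup (Q := Q) (fun x => ∃ k, x ^ p ^ k = 1) := by
  intro N₁ N₂ hnorm h₁ h₂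
  haveI := Fact.mk hp
  exact elem_iff_isPGroup.2
    (IsPGroup.to_sup_of_normal_right' (elem_iff_isPGroup.1 h₁) (elem_iff_isPGroup.1 h₂) hnorm)

lemma esup_p' (hp : p.Prime) : ESup (Q := Q) (fun x => ¬ p ∣ orderOf x) := by
  intro N₁ N₂ hnorm h₁ h₂ x hx
  intro hdvd
  have hcard : ¬ p ∣ Nat.card (N₁ ⊔ N₂ : Subgroup Q) := by
    intro h
    rcases (Nat.Prime.dvd_mul hp).1 (h.trans (card_sup_dvd_s8 hnorm)) with h | h
    · exact not_dvd_card_of_forall hp h₁ h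
    · exact not_dvd_card_of_forall hp h₂ h
  exact hcard (hdvd.trans (Subgroup.orderOf_dvd_natCard _ hx))

end Pi

section Chain
variable {Q : Type*} [Group Q] [Finite Q]

lemma minNormal_elem {E : Q → Prop} (hE1 : E 1) (hEconj : EConj E) (hEsup : ESup E)
    {H : Subgroup Q} (hH : IsMinNormal H)
    {n : ℕ} (t : Fin (n + 1) → Subgroup Q) (hlast : t (Fin.last n) = H)
    (hmono : ∀ i : Fin n, t i.castSucc ≤ t i.succ)
    (hstep : ∀ i : Fin n, ∀ b ∈ t i.succ, ∀ x ∈ t i.castSucc, b * x * b⁻¹ ∈ t i.castSucc)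
    {i0 : Fin (n + 1)} (hT : ∀ x ∈ t i0, E x) (hTne : t i0 ≠ ⊥) :
    ∀ x ∈ H, E x := by
  have hmonot : Monotone t := Fin.monotone_iff_le_succ.2 hmono
  have hqT : Qual E (t i0) (t i0) :=
    ⟨le_rfl, fun b hb x hx =>
      Subgroup.mul_mem _ (Subgroup.mul_mem _ hb hx) (Subgroup.inv_mem _ hb), hT⟩
  have key : ∀ j : Fin (n + 1), i0 ≤ j → t i0 ≤ OpIn E (t j) := by
    intro j
    induction j using Fin.induction with
    | zero =>
      intro h
      have h0 : i0 = 0 := le_antisymm h (Fin.zero_le _)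
      rw [← h0]; exact le_opIn hqT
    | succ j ih =>
      intro h
      by_cases hij : i0 ≤ j.castSucc
      · exact (ih hij).trans (opIn_step hE1 hEconj hEsup (hmono j) (hstep j))
      · have h1 : (i0 : ℕ) ≤ (j : ℕ) + 1 := by simpa [Fin.le_def] using h
        have h2 : ¬ (i0 : ℕ) ≤ (j : ℕ) := by simpa [Fin.le_def] using hij
        have h3 : i0 = j.succ := Fin.ext (by simp only [Fin.val_succ]; omega)
        rw [← h3]; exact le_opIn hqT
  have hTH : t i0 ≤ H := hlast ▸ hmonot (Fin.le_last i0)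
  have hTO : t i0 ≤ OpIn E (⊤ : Subgroup Q) := by
    refine (key (Fin.last n) (Fin.le_last i0)).trans ?_
    rw [hlast]
    exact opIn_step hE1 hEconj hEsup le_top (fun b _ x hx => hH.2.1.conj_mem x hx b)
  set O := OpIn E (⊤ : Subgroup Q) with hO
  have hOq : Qual E ⊤ O := qual_opIn hE1 hEsup
  have hnorm : (O ⊓ H).Normal :=
    ⟨fun x hx g => ⟨hOq.2.1 g trivial x hx.1, hH.2.1.conj_mem x hx.2 g⟩⟩
  rcases hH.2.2 (O ⊓ H) hnorm inf_le_right with hbot | heq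
  · exact absurd (le_bot_iff.1 (hbot ▸ le_inf hTO hTH)) hTne
  · intro x hx
    exact hOq.2.2 x (inf_eq_right.1 heq hx)

end Chain

section Arith
variable {G : Type*} [Group G] [Finite G]

lemma index_eq_relindex (K M : Subgroup G) [K.Normal] (hsup : K ⊔ M = ⊤) :
    M.relIndex K = M.index := by
  have h1 : M.relIndex K * K.index = (M ⊓ K).index := by
    have := Subgroup.relIndex_inf_mul_relIndex M K (⊤ : Subgroup G)
    rwa [inf_top_eq, Subgroup.relIndex_top_right, Subgroup.relIndex_top_right] at this
  have h2 : K.relIndex M * M.index = (M ⊓ K).index := by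
    rw [← Subgroup.inf_relIndex_left]
    exact Subgroup.relIndex_mul_index inf_le_left
  have h3 : K.relIndex M = K.index := by
    have := Subgroup.relIndex_sup_right M K
    rw [sup_comm M K, hsup, Subgroup.relIndex_top_right] at this
    exact this.symm
  have hKne : K.index ≠ 0 := Subgroup.index_ne_zero_of_finite
  have : M.relIndex K * K.index = M.index * K.index := by
    rw [h1, ← h2, h3]; ring
  exact Nat.eq_of_mul_eq_mul_right (Nat.pos_of_ne_zero hKne) this

lemma index_dvd_card_chief (K L M : Subgroup G) [K.Normal] [L.Normal]
    (hsup : K ⊔ M = ⊤) (hLM : L ≤ M) (hLK : L ≤ K) :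
    M.index ∣ Nat.card (K.map (QuotientGroup.mk' L)) := by
  have hcard : Nat.card (K.map (QuotientGroup.mk' L)) = L.relIndex K := by
    have h := Subgroup.relIndex_ker (K := K) (f := QuotientGroup.mk' L)
    rw [QuotientGroup.ker_mk'] at h
    exact h.symm
  rw [hcard]
  have h1 : L.relIndex (M ⊓ K) * (M ⊓ K).relIndex K = L.relIndex K :=
    Subgroup.relIndex_mul_relIndex L (M ⊓ K) K (le_inf hLM hLK) inf_le_right
  have h2 : (M ⊓ K).relIndex K = M.relIndex K := Subgroup.inf_relIndex_right M K
  rw [← h1, h2, index_eq_relindex K M hsup]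
  exact Dvd.intro_left _ rfl

end Arith

section Transition

lemma exists_transition {n : ℕ} (P : Fin (n + 1) → Prop) (h0 : ¬ P 0) (hl : P (Fin.last n)) :
    ∃ i : Fin n, ¬ P i.castSucc ∧ P i.succ := by
  classical
  set S : Finset (Fin (n + 1)) := Finset.univ.filter P with hS
  have hne : S.Nonempty := ⟨Fin.last n, by simp [hS, hl]⟩
  set m := S.min' hne with hm
  have hPm : P m := by
    have := S.min'_mem hne
    simpa [hS] using this
  have hm0 : (m : ℕ) ≠ 0 := by
    intro h
    exact h0 (by rwa [show (0 : Fin (n+1)) = m from (Fin.ext h.symm)])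
  have hm1 : 1 ≤ (m : ℕ) := Nat.pos_of_ne_zero hm0
  have hmn : (m : ℕ) < n + 1 := m.isLt
  refine ⟨⟨(m : ℕ) - 1, by omega⟩, ?_, ?_⟩
  · intro hP
    have hmem : ((⟨(m : ℕ) - 1, by omega⟩ : Fin n).castSucc) ∈ S := by
      simp only [hS, Finset.mem_filter, Finset.mem_univ, true_and]
      exact hP
    have hle := S.min'_le _ hmem
    have : (m : ℕ) ≤ (m : ℕ) - 1 := by
      simpa [Fin.le_def, Fin.coe_castSucc] using hle
    omega
  · have heq : (⟨(m : ℕ) - 1, by omega⟩ : Fin n).succ = m := by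
      ext
      simp only [Fin.val_succ]
      omega
    rw [heq]
    exact hPm

end Transition

section Abelian
variable {G : Type*} [Group G] [Finite G]

lemma comm_mem_of_not_cover (p : ℕ) (hp : p.Prime) (M : Subgroup G) (hM : IsCoatom M)
    (hdvd : p ∣ M.index) (hps : IsPSolvable p G)
    (K L : Subgroup G) [hKn : K.Normal] [hLn : L.Normal] (hLK : L ≤ K)
    (hchief : IsMinNormal (K.map (QuotientGroup.mk' L)))
    (hLM : L ≤ M) (hKM : ¬ K ≤ M) :
    ∀ a b : G, a ∈ K → b ∈ K → a * b * a⁻¹ * b⁻¹ ∈ L := by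
  haveI := Fact.mk hp
  obtain ⟨n, s, hs0, hslast, hsmono, hsnorm, hsfac⟩ := hps
  have hHn : (K.map (QuotientGroup.mk' L)).Normal :=
    hKn.map _ (QuotientGroup.mk'_surjective L)
  set Q := G ⧸ L with hQ
  set H : Subgroup Q := K.map (QuotientGroup.mk' L) with hH
  have hsup : K ⊔ M = ⊤ := by
    rw [sup_comm]
    exact hM.2 (M ⊔ K) (left_lt_sup.2 hKM)
  have hpH : p ∣ Nat.card H := hdvd.trans (index_dvd_card_chief K L M hsup hLM hLK)
  set t : Fin (n + 1) → Subgroup Q := fun j => (s j ⊓ K).map (QuotientGroup.mk' L) with ht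
  have ht0 : t 0 = ⊥ := by simp [ht, hs0]
  have htlast : t (Fin.last n) = H := by simp [ht, hslast, hH]
  have htmono : ∀ i : Fin n, t i.castSucc ≤ t i.succ := fun i =>
    Subgroup.map_mono (inf_le_inf_right K (hsmono i))
  have htstep : ∀ i : Fin n, ∀ b ∈ t i.succ, ∀ x ∈ t i.castSucc, b * x * b⁻¹ ∈ t i.castSucc := by
    intro i b hb x hx
    obtain ⟨b0, hb0, rfl⟩ := hb
    obtain ⟨x0, hx0, rfl⟩ := hx
    refine ⟨b0 * x0 * b0⁻¹, ⟨?_, hKn.conj_mem x0 hx0.2 b0⟩, by simp [map_mul, map_inv]⟩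
    have hx0' : x0 ∈ s i.succ := hsmono i hx0.1
    have hc := (hsnorm i).conj_mem ⟨x0, hx0'⟩ (Subgroup.mem_subgroupOf.2 hx0.1) ⟨b0, hb0.1⟩
    simpa [Subgroup.mem_subgroupOf] using hc
  obtain ⟨i, hib, hin⟩ := exists_transition (fun j => t j ≠ ⊥) (by simp [ht0]) (by
    show t (Fin.last n) ≠ ⊥
    rw [htlast]; exact hchief.1)
  rw [not_ne_iff] at hib
  have hbK : s i.castSucc ⊓ K ≤ L := by
    have h := (Subgroup.map_eq_bot_iff _).1 hib
    rwa [QuotientGroup.ker_mk'] at h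
  set d := (s i.castSucc).relIndex (s i.succ) with hd
  have hpow : ∀ x ∈ t i.succ, x ^ d = 1 := by
    intro x hx
    obtain ⟨a, ha, rfl⟩ := hx
    haveI := hsnorm i
    have h1 : (⟨a, ha.1⟩ : s i.succ) ^ d ∈ (s i.castSucc).subgroupOf (s i.succ) :=
      Subgroup.pow_index_mem _ _
    have h2 : a ^ d ∈ s i.castSucc := by
      have := Subgroup.mem_subgroupOf.1 h1
      simpa using this
    have h3 : a ^ d ∈ L := hbK ⟨h2, K.pow_mem ha.2 d⟩
    rw [← map_pow]
    have : a ^ d ∈ (QuotientGroup.mk' L).ker := by rwa [QuotientGroup.ker_mk']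
    exact this
  -- the chief factor H is elementwise p-power order, or we get a contradiction
  have helem : ∀ x ∈ H, ∃ k', x ^ p ^ k' = 1 := by
    rcases hsfac i with ⟨k, hk⟩ | hnd
    · exact minNormal_elem ⟨0, one_pow _⟩ econj_p (esup_p hp) hchief t htlast htmono htstep
        (i0 := i.succ) (fun x hx => ⟨k, by rw [← hk]; exact hpow x hx⟩) hin
    · have helem' : ∀ x ∈ H, ¬ p ∣ orderOf x := by
        refine minNormal_elem ?_ econj_p' (esup_p' hp) hchief t htlast htmono htstep
          (i0 := i.succ) (fun x hx hdd => ?_) hin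
        · simpa using hp.one_lt.ne'
        · exact hnd (hdd.trans (orderOf_dvd_of_pow_eq_one (hpow x hx)))
      exact absurd hpH (not_dvd_card_of_forall hp helem')
  -- p-group, hence nontrivial center, hence abelian by minimality
  have hpG : IsPGroup p H := elem_iff_isPGroup.1 helem
  haveI : Nontrivial H := (Subgroup.nontrivial_iff_ne_bot H).2 hchief.1
  have hcen : Nontrivial (Subgroup.center H) := hpG.center_nontrivial
  obtain ⟨z, hzc, hz1⟩ := (Subgroup.center (H : Subgroup Q)).exists_ne_one_of_nontrivial
  set Z : Subgroup Q := Subgroup.centralizer (H : Set Q) ⊓ H with hZ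
  have hZn : Z.Normal := by
    constructor
    intro x hx g
    have hx' := Subgroup.mem_inf.1 hx
    refine Subgroup.mem_inf.2 ⟨?_, hHn.conj_mem x hx'.2 g⟩
    rw [Subgroup.mem_centralizer_iff]
    intro h hh
    have hconj : g⁻¹ * h * g ∈ H := by
      have := hHn.conj_mem h hh g⁻¹
      simpa using this
    have hcomm := Subgroup.mem_centralizer_iff.1 hx'.1 _ hconj
    have h2 := congrArg (fun w => g * w * g⁻¹) hcomm
    simpa [mul_assoc] using h2
  have hZbot : Z ≠ ⊥ := by
    intro hbot
    have hzZ : (z : Q) ∈ Z := by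
      refine Subgroup.mem_inf.2 ⟨?_, z.2⟩
      rw [Subgroup.mem_centralizer_iff]
      intro h hh
      have := Subgroup.mem_center_iff.1 hzc ⟨h, hh⟩
      exact congrArg Subtype.val this
    rw [hbot, Subgroup.mem_bot] at hzZ
    exact hz1 (by ext; exact hzZ)
  have hZH : Z = H := (hchief.2.2 Z hZn inf_le_right).resolve_left hZbot
  have hcent : H ≤ Subgroup.centralizer (H : Set Q) := by
    intro x hx
    have hxZ : x ∈ Z := by rw [hZH]; exact hx
    exact (Subgroup.mem_inf.1 hxZ).1
  intro a b ha hb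
  have h1 : QuotientGroup.mk' L a ∈ H := ⟨a, ha, rfl⟩
  have h2 : QuotientGroup.mk' L b ∈ H := ⟨b, hb, rfl⟩
  have hcomm := Subgroup.mem_centralizer_iff.1 (hcent h1) _ h2
  have : (QuotientGroup.mk' L) (a * b * a⁻¹ * b⁻¹) = 1 := by
    simp only [map_mul, map_inv]
    rw [← hcomm]
    group
  have hker : a * b * a⁻¹ * b⁻¹ ∈ (QuotientGroup.mk' L).ker := this
  rwa [QuotientGroup.ker_mk'] at hker

end Abelian

section Avoid
variable {G : Type*} [Group G]

lemma avoid_of_comm (M K L : Subgroup G) [hKn : K.Normal] [hLn : L.Normal]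
    (hM : IsCoatom M) (hLK : L ≤ K)
    (hchief : IsMinNormal (K.map (QuotientGroup.mk' L)))
    (hLM : L ≤ M) (hKM : ¬ K ≤ M)
    (hcomm : ∀ a b : G, a ∈ K → b ∈ K → a * b * a⁻¹ * b⁻¹ ∈ L) : M ⊓ K = L := by
  set T := M ⊓ K with hT
  have hLT : L ≤ T := le_inf hLM hLK
  have hsup : K ⊔ M = ⊤ := by
    rw [sup_comm]
    exact hM.2 (M ⊔ K) (left_lt_sup.2 hKM)
  have hdir : ∀ k ∈ K, ∀ x ∈ T, k * x * k⁻¹ ∈ T := by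
    intro k hk x hx
    have h1 : k * x * k⁻¹ * x⁻¹ ∈ L := hcomm k x hk hx.2
    have : k * x * k⁻¹ = (k * x * k⁻¹ * x⁻¹) * x := by group
    rw [this]
    exact T.mul_mem (hLT h1) hx
  have hTn : T.Normal := by
    rw [← Subgroup.normalizer_eq_top_iff]
    rw [eq_top_iff, ← hsup]
    refine sup_le ?_ ?_
    · intro k hk
      rw [Subgroup.mem_normalizer_iff]
      intro x
      constructor
      · intro hx; exact hdir k hk x hx
      · intro hx
        have := hdir k⁻¹ (K.inv_mem hk) _ hx
        simpa [mul_assoc] using this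
    · intro m hm
      rw [Subgroup.mem_normalizer_iff]
      intro x
      constructor
      · intro hx; exact ⟨M.mul_mem (M.mul_mem hm hx.1) (M.inv_mem hm),
          hKn.conj_mem x hx.2 m⟩
      · intro hx
        have h1 : x = m⁻¹ * (m * x * m⁻¹) * m := by group
        rw [h1]
        exact ⟨M.mul_mem (M.mul_mem (M.inv_mem hm) hx.1) hm, by
          have := hKn.conj_mem _ hx.2 m⁻¹
          simpa [mul_assoc] using this⟩
  rcases chief_min hLK hchief T hTn hLT inf_le_right with h | h
  · exact h
  · exact absurd (h ▸ inf_le_left : K ≤ M) hKM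

end Avoid

section Core
variable {G : Type*} [Group G]

lemma centralizer_normal (H : Subgroup G) [hHn : H.Normal] :
    (Subgroup.centralizer (H : Set G)).Normal := by
  constructor
  intro x hx g
  rw [Subgroup.mem_centralizer_iff]
  intro h hh
  have hconj : g⁻¹ * h * g ∈ H := by
    have := hHn.conj_mem h hh g⁻¹
    simpa using this
  have hcomm := Subgroup.mem_centralizer_iff.1 hx _ hconj
  have h2 := congrArg (fun w => g * w * g⁻¹) hcomm
  simpa [mul_assoc] using h2

variable (M K L : Subgroup G) [hKn : K.Normal] [hLn : L.Normal]

lemma inf_core_eq (hM : IsCoatom M) (hLK : L ≤ K)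
    (hchief : IsMinNormal (K.map (QuotientGroup.mk' L)))
    (hLM : L ≤ M) (hKM : ¬ K ≤ M) : K ⊓ M.normalCore = L := by
  have hLN : L ≤ M.normalCore := Subgroup.normal_le_normalCore.2 hLM
  have hinfn : (K ⊓ M.normalCore).Normal :=
    ⟨fun x hx g => ⟨hKn.conj_mem x hx.1 g, (M.normalCore_normal).conj_mem x hx.2 g⟩⟩
  rcases chief_min hLK hchief (K ⊓ M.normalCore) hinfn
      (le_inf hLK hLN) inf_le_left with h | h
  · exact h
  · exfalso
    have : K ≤ M.normalCore := by rw [← h]; exact inf_le_right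
    exact hKM (this.trans M.normalCore_le)

lemma map_core_ne_bot (hKM : ¬ K ≤ M) :
    K.map (QuotientGroup.mk' M.normalCore) ≠ ⊥ := by
  intro h
  have := (Subgroup.map_eq_bot_iff _).1 h
  rw [QuotientGroup.ker_mk'] at this
  exact hKM (this.trans M.normalCore_le)

lemma minNormal_core (hM : IsCoatom M) (hLK : L ≤ K)
    (hchief : IsMinNormal (K.map (QuotientGroup.mk' L)))
    (hLM : L ≤ M) (hKM : ¬ K ≤ M) :
    IsMinNormal (K.map (QuotientGroup.mk' M.normalCore)) := by
  set N := M.normalCore with hN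
  have hLN : L ≤ N := Subgroup.normal_le_normalCore.2 hLM
  have hKN : K ⊓ N = L := inf_core_eq M K L hM hLK hchief hLM hKM
  refine ⟨map_core_ne_bot M K hKM, hKn.map _ (QuotientGroup.mk'_surjective N), ?_⟩
  intro Y hY hYle
  set T := Y.comap (QuotientGroup.mk' N) with hTdef
  have hTn : T.Normal := hY.comap _
  have hNT : N ≤ T := by
    intro x hx
    have : QuotientGroup.mk' N x = 1 := by
      rw [← QuotientGroup.ker_mk' N] at hx
      exact hx
    simp only [hTdef, Subgroup.mem_comap, this]
    exact Y.one_mem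
  have hTle : T ≤ K ⊔ N := by
    have := Subgroup.comap_mono (f := QuotientGroup.mk' N) hYle
    rw [Subgroup.comap_map_eq, QuotientGroup.ker_mk'] at this
    exact le_trans (by rw [hTdef]) this
  have hYmap : T.map (QuotientGroup.mk' N) = Y :=
    Subgroup.map_comap_eq_self_of_surjective (QuotientGroup.mk'_surjective N) Y
  have hdec : T ≤ (K ⊓ T) ⊔ N := by
    intro t ht
    have htKN : t ∈ N ⊔ K := by
      rw [sup_comm]
      exact hTle ht
    obtain ⟨nn, hn, k, hk, rfl⟩ := mem_mul_of_mem_sup htKN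
    have hkT : k ∈ T := by
      have : k = nn⁻¹ * (nn * k) := by group
      rw [this]
      exact T.mul_mem (T.inv_mem (hNT hn)) ht
    exact Subgroup.mul_mem _ (le_sup_right (a := K ⊓ T) (b := N) hn)
      (le_sup_left (a := K ⊓ T) (b := N) ⟨hk, hkT⟩)
  have hinfn : (K ⊓ T).Normal :=
    ⟨fun x hx g => ⟨hKn.conj_mem x hx.1 g, hTn.conj_mem x hx.2 g⟩⟩
  rcases chief_min hLK hchief (K ⊓ T) hinfn
      (le_inf hLK (hLN.trans hNT)) inf_le_left with h | h
  · left
    have hTN : T = N := le_antisymm (by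
      refine hdec.trans ?_
      rw [h]
      exact sup_le hLN le_rfl) hNT
    rw [← hYmap, hTN]
    exact (Subgroup.map_eq_bot_iff _).2 (by rw [QuotientGroup.ker_mk'])
  · right
    have hKT : K ≤ T := by rw [← h]; exact inf_le_right
    have hTeq : T = K ⊔ N := le_antisymm hTle (sup_le hKT hNT)
    rw [← hYmap, hTeq, Subgroup.map_sup]
    have : N.map (QuotientGroup.mk' N) = ⊥ :=
      (Subgroup.map_eq_bot_iff _).2 (by rw [QuotientGroup.ker_mk'])
    rw [this, sup_bot_eq]

end Core

section Unique
variable {G : Type*} [Group G]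

lemma core_map_core_bot (M : Subgroup G) :
    (M.map (QuotientGroup.mk' M.normalCore)).normalCore = ⊥ := by
  set N := M.normalCore with hN
  set Mb := M.map (QuotientGroup.mk' N) with hMb
  set U := Mb.normalCore.comap (QuotientGroup.mk' N) with hU
  have hUn : U.Normal := (Mb.normalCore_normal).comap _
  have hUM : U ≤ M := by
    have h1 : Mb.normalCore ≤ Mb := Mb.normalCore_le
    have h2 := Subgroup.comap_mono (f := QuotientGroup.mk' N) h1
    have h3 : Mb.comap (QuotientGroup.mk' N) = M ⊔ N := by
      rw [hMb, Subgroup.comap_map_eq, QuotientGroup.ker_mk']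
    rw [h3] at h2
    have h4 : M ⊔ N = M := sup_eq_left.2 M.normalCore_le
    rw [h4] at h2
    exact le_trans (by rw [hU]) h2
  have hUN : U ≤ N := Subgroup.normal_le_normalCore.2 hUM
  have : Mb.normalCore = U.map (QuotientGroup.mk' N) :=
    (Subgroup.map_comap_eq_self_of_surjective (QuotientGroup.mk'_surjective N) _).symm
  rw [this]
  have hple := Subgroup.map_mono (f := QuotientGroup.mk' N) hUN
  have : N.map (QuotientGroup.mk' N) = ⊥ :=
    (Subgroup.map_eq_bot_iff _).2 (by rw [QuotientGroup.ker_mk'])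
  rw [this] at hple
  exact le_bot_iff.1 hple

lemma unique_minNormal (M K : Subgroup G) [hKn : K.Normal]
    (hsup : K ⊔ M = ⊤) (hKM : ¬ K ≤ M)
    (habel : ∀ a b : G, a ∈ K → b ∈ K → a * b * a⁻¹ * b⁻¹ ∈ M.normalCore)
    (hmin : IsMinNormal (K.map (QuotientGroup.mk' M.normalCore)))
    (X : Subgroup (G ⧸ M.normalCore)) (hX : IsMinNormal X) :
    X = K.map (QuotientGroup.mk' M.normalCore) := by
  set N := M.normalCore with hN
  set X₀ : Subgroup (G ⧸ N) := K.map (QuotientGroup.mk' N) with hX₀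
  set Mb : Subgroup (G ⧸ N) := M.map (QuotientGroup.mk' N) with hMb
  haveI hX₀n : X₀.Normal := hKn.map _ (QuotientGroup.mk'_surjective N)
  -- X₀ is abelian
  have habel' : ∀ x ∈ X₀, ∀ y ∈ X₀, x * y = y * x := by
    rintro x ⟨a, ha, rfl⟩ y ⟨b, hb, rfl⟩
    have h1 : (QuotientGroup.mk' N) (a * b * a⁻¹ * b⁻¹) = 1 := by
      have := habel a b ha hb
      rw [← QuotientGroup.ker_mk' N] at this
      exact this
    simp only [map_mul, map_inv] at h1
    have h2 := congrArg (fun w => w * ((QuotientGroup.mk' N) b * (QuotientGroup.mk' N) a)) h1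
    simpa [mul_assoc] using h2
  -- X₀ ⊔ Mb = ⊤
  have hsupb : X₀ ⊔ Mb = ⊤ := by
    rw [hX₀, hMb, ← Subgroup.map_sup, hsup]
    exact Subgroup.map_top_of_surjective _ (QuotientGroup.mk'_surjective N)
  -- centralizer of X₀ equals X₀
  set C : Subgroup (G ⧸ N) := Subgroup.centralizer (X₀ : Set (G ⧸ N)) with hC
  haveI hCn : C.Normal := centralizer_normal X₀
  have hX₀C : X₀ ≤ C := by
    intro x hx
    rw [Subgroup.mem_centralizer_iff]
    intro y hy
    exact habel' y hy x hx
  have hCMb : C ⊓ Mb = ⊥ := by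
    have hnorm : (C ⊓ Mb).Normal := by
      rw [← Subgroup.normalizer_eq_top_iff, eq_top_iff, ← hsupb]
      refine sup_le ?_ ?_
      · intro x hx
        rw [Subgroup.mem_normalizer_iff]
        intro c
        have key : ∀ u ∈ X₀, ∀ cc ∈ C ⊓ Mb, u * cc * u⁻¹ = cc := by
          intro u hu cc hcc
          have h := Subgroup.mem_centralizer_iff.1 hcc.1 u hu
          rw [h]
          group
        constructor
        · intro hc; rw [key x hx c hc]; exact hc
        · intro hc
          have h1 := key x⁻¹ (X₀.inv_mem hx) _ hc
          have h2 : x⁻¹ * (x * c * x⁻¹) * x⁻¹⁻¹ = c := by group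
          rw [h2] at h1
          rw [h1]
          exact hc
      · intro m hm
        rw [Subgroup.mem_normalizer_iff]
        intro c
        constructor
        · intro hc
          exact ⟨hCn.conj_mem c hc.1 m,
            Subgroup.mul_mem _ (Subgroup.mul_mem _ hm hc.2) (Mb.inv_mem hm)⟩
        · intro hc
          have h2 : c = m⁻¹ * (m * c * m⁻¹) * m := by group
          rw [h2]
          refine ⟨?_, Subgroup.mul_mem _ (Subgroup.mul_mem _ (Mb.inv_mem hm) hc.2) hm⟩
          have := hCn.conj_mem _ hc.1 m⁻¹
          simpa [mul_assoc] using this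
    have hle : C ⊓ Mb ≤ Mb.normalCore := Subgroup.normal_le_normalCore.2 inf_le_right
    rw [core_map_core_bot M] at hle
    exact le_bot_iff.1 hle
  have hCX₀ : C = X₀ := by
    refine le_antisymm ?_ hX₀C
    intro c hc
    have hctop : c ∈ X₀ ⊔ Mb := by rw [hsupb]; trivial
    obtain ⟨x, hx, m, hm, rfl⟩ := mem_mul_of_mem_sup hctop
    have hmC : m ∈ C := by
      have : m = x⁻¹ * (x * m) := by group
      rw [this]
      exact C.mul_mem (C.inv_mem (hX₀C hx)) hc
    have : m ∈ C ⊓ Mb := ⟨hmC, hm⟩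
    rw [hCMb, Subgroup.mem_bot] at this
    rw [this, mul_one]
    exact hx
  -- any minimal normal X is contained in C
  rcases hX.2.2 (X ⊓ X₀) ⟨fun x hx g => ⟨hX.2.1.conj_mem x hx.1 g, hX₀n.conj_mem x hx.2 g⟩⟩
      inf_le_left with hb | he
  · -- X centralizes X₀, so X ≤ C = X₀
    have hXC : X ≤ C := by
      intro x hx
      rw [Subgroup.mem_centralizer_iff]
      intro y hy
      have hcomm : y * x * y⁻¹ * x⁻¹ ∈ X ⊓ X₀ := by
        constructor
        · have h1 : y * x * y⁻¹ ∈ X := hX.2.1.conj_mem x hx y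
          exact X.mul_mem h1 (X.inv_mem hx)
        · have h1 : x * y⁻¹ * x⁻¹ ∈ X₀ := hX₀n.conj_mem y⁻¹ (X₀.inv_mem hy) x
          have : y * x * y⁻¹ * x⁻¹ = y * (x * y⁻¹ * x⁻¹) := by group
          rw [this]
          exact X₀.mul_mem hy h1
      rw [hb, Subgroup.mem_bot] at hcomm
      have := congrArg (fun w => w * (x * y)) hcomm
      simpa [mul_assoc] using this
    have hXX₀ : X ≤ X₀ := hCX₀ ▸ hXC
    rcases hmin.2.2 X hX.2.1 hXX₀ with h | h
    · exact absurd h hX.1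
    · exact h
  · have hXX₀ : X ≤ X₀ := by
      rw [← he]; exact inf_le_right
    rcases hmin.2.2 X hX.2.1 hXX₀ with h | h
    · exact absurd h hX.1
    · exact h

end Unique

section Iso
variable {G : Type*} [Group G]

lemma conjIso_map (K L N : Subgroup G) [hKn : K.Normal] [hLn : L.Normal] [hNn : N.Normal]
    (hLN : L ≤ N) (hKN : K ⊓ N = L) :
    ConjIso (K.map (QuotientGroup.mk' L)) (K.map (QuotientGroup.mk' N)) := by
  set φ : G ⧸ L →* G ⧸ N :=
    QuotientGroup.map L N (MonoidHom.id G) (fun x hx => hLN hx) with hφ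
  have hφmk : ∀ g : G, φ (QuotientGroup.mk g) = QuotientGroup.mk g := fun g => rfl
  have himg : ∀ x : (K.map (QuotientGroup.mk' L)), φ (x : G ⧸ L) ∈ K.map (QuotientGroup.mk' N) := by
    rintro ⟨x, hx⟩
    obtain ⟨a, ha, hax⟩ := hx
    refine ⟨a, ha, ?_⟩
    rw [QuotientGroup.mk'_apply] at hax ⊢
    simp only [← hax, hφmk]
  set ψ : (K.map (QuotientGroup.mk' L)) →* (K.map (QuotientGroup.mk' N)) :=
    ((φ.comp (K.map (QuotientGroup.mk' L)).subtype)).codRestrict _ (fun x => himg x) with hψ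
  have hψcoe : ∀ x, ((ψ x : (K.map (QuotientGroup.mk' N))) : G ⧸ N) = φ (x : G ⧸ L) :=
    fun x => rfl
  have hinj : Function.Injective ψ := by
    rw [injective_iff_map_eq_one]
    intro x hx1
    obtain ⟨a, ha, hax⟩ := x.2
    have h1 : φ (x : G ⧸ L) = 1 := by
      rw [← hψcoe x, hx1]
      rfl
    rw [← hax, QuotientGroup.mk'_apply, hφmk] at h1
    have h2 : a ∈ N := (QuotientGroup.eq_one_iff a).1 h1
    have h3 : a ∈ L := by rw [← hKN]; exact ⟨ha, h2⟩
    have h4 : (x : G ⧸ L) = 1 := by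
      rw [← hax, QuotientGroup.mk'_apply]
      exact (QuotientGroup.eq_one_iff a).2 h3
    exact Subtype.ext h4
  have hsurj : Function.Surjective ψ := by
    rintro ⟨y, hy⟩
    obtain ⟨a, ha, hay⟩ := hy
    refine ⟨⟨QuotientGroup.mk' L a, ⟨a, ha, rfl⟩⟩, ?_⟩
    apply Subtype.ext
    rw [hψcoe]
    show φ ((QuotientGroup.mk' L) a) = y
    rw [QuotientGroup.mk'_apply, hφmk]
    rw [QuotientGroup.mk'_apply] at hay
    exact hay
  refine ⟨MulEquiv.ofBijective ψ ⟨hinj, hsurj⟩, ?_⟩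
  intro g x x' hxx'
  have hcoe : ∀ w : (K.map (QuotientGroup.mk' L)),
      ((MulEquiv.ofBijective ψ ⟨hinj, hsurj⟩ w : (K.map (QuotientGroup.mk' N))) : G ⧸ N)
        = φ (w : G ⧸ L) := fun w => rfl
  rw [hcoe, hcoe, hxx']
  simp only [map_mul, map_inv, hφmk]

end Iso

section Dicho
variable {G : Type*} [Group G] [Finite G]

lemma dicho (p : ℕ) (hp : p.Prime) (M : Subgroup G) (hM : IsCoatom M)
    (hdvd : p ∣ M.index) (hps : IsPSolvable p G)
    (K L : Subgroup G) [hKn : K.Normal] [hLn : L.Normal] (hLK : L ≤ K)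
    (hchief : IsMinNormal (K.map (QuotientGroup.mk' L)))
    (hnc : ¬ K ≤ L ⊔ M) :
    L ≤ M ∧ ¬ K ≤ M ∧ M ⊓ K = L ∧
      (∀ a b : G, a ∈ K → b ∈ K → a * b * a⁻¹ * b⁻¹ ∈ L) ∧
      (∀ X : Subgroup (G ⧸ M.normalCore), IsMinNormal X →
        ConjIso (K.map (QuotientGroup.mk' L)) X) := by
  have hLM : L ≤ M := by
    by_contra h
    have : L ⊔ M = ⊤ := hM.2 (L ⊔ M) (right_lt_sup.2 h)
    exact hnc (this ▸ le_top)
  have hKM : ¬ K ≤ M := fun h => hnc (h.trans le_sup_right)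
  have habel : ∀ a b : G, a ∈ K → b ∈ K → a * b * a⁻¹ * b⁻¹ ∈ L :=
    comm_mem_of_not_cover p hp M hM hdvd hps K L hLK hchief hLM hKM
  have havoid : M ⊓ K = L := avoid_of_comm M K L hM hLK hchief hLM hKM habel
  have hsup : K ⊔ M = ⊤ := by
    rw [sup_comm]
    exact hM.2 (M ⊔ K) (left_lt_sup.2 hKM)
  set N := M.normalCore with hNdef
  have hLN : L ≤ N := Subgroup.normal_le_normalCore.2 hLM
  have hKN : K ⊓ N = L := inf_core_eq M K L hM hLK hchief hLM hKM
  have hminN : IsMinNormal (K.map (QuotientGroup.mk' N)) :=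
    minNormal_core M K L hM hLK hchief hLM hKM
  have habelN : ∀ a b : G, a ∈ K → b ∈ K → a * b * a⁻¹ * b⁻¹ ∈ N :=
    fun a b ha hb => hLN (habel a b ha hb)
  refine ⟨hLM, hKM, havoid, habel, ?_⟩
  intro X hX
  have hXeq : X = K.map (QuotientGroup.mk' N) :=
    unique_minNormal M K hsup hKM habelN hminN X hX
  rw [hXeq]
  exact conjIso_map K L N hLN hKN

end Dicho

theorem stmt8 {G : Type*} [Group G] [Finite G] (p : ℕ) (hp : p.Prime)
    (M : Subgroup G) (hM : IsCoatom M) (hdvd : p ∣ M.index)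
    (hps : IsPSolvable p G)
    (K L : Subgroup G) [hKn : K.Normal] [hLn : L.Normal] (hLK : L ≤ K)
    (hchief : IsMinNormal (K.map (QuotientGroup.mk' L))) :
    (∀ X : Subgroup (G ⧸ M.normalCore), IsMinNormal X →
      Xor' ((K : Set G) = (L : Set G) * ((M ⊓ K : Subgroup G) : Set G))
        (M ⊓ K ≤ L ∧ (∀ a b : G, a ∈ K → b ∈ K → a * b * a⁻¹ * b⁻¹ ∈ L) ∧
          ConjIso (K.map (QuotientGroup.mk' L)) X)) ∧
    (∀ (n : ℕ) (s : Fin (n + 1) → Subgroup G), s 0 = ⊥ → s (Fin.last n) = ⊤ →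
      (∀ i : Fin n, s i.castSucc ≤ s i.succ) →
      ∀ hnorm : ∀ i, (s i).Normal,
      (∀ i : Fin n, IsMinNormal ((s i.succ).map
        (@QuotientGroup.mk' G _ (s i.castSucc) (hnorm i.castSucc)))) →
      (∃! i : Fin n, s i.succ ⊓ M ≤ s i.castSucc) ∧
      ∀ i : Fin n, ¬ (s i.succ ⊓ M ≤ s i.castSucc) →
        ((s i.succ : Set G) =
          (s i.castSucc : Set G) * ((M ⊓ s i.succ : Subgroup G) : Set G))) := by
  constructor
  · intro X hX
    by_cases hcov : K ≤ L ⊔ M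
    · refine Or.inl ⟨cover_of_le hLK hcov, ?_⟩
      rintro ⟨havd, -, -⟩
      refine not_le_of_chief hchief ?_
      intro x hx
      have hx' : x ∈ (L : Set G) * ((M ⊓ K : Subgroup G) : Set G) := by
        rw [← cover_of_le hLK hcov]; exact hx
      obtain ⟨l, hl, m, hm, rfl⟩ := hx'
      exact L.mul_mem hl (havd hm)
    · obtain ⟨hLM, hKM, havoid, habel, hconj⟩ := dicho p hp M hM hdvd hps K L hLK hchief hcov
      refine Or.inr ⟨⟨havoid.le, habel, hconj X hX⟩, ?_⟩
      intro hcset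
      exact hcov (le_sup_of_cover hcset)
  · intro n s hs0 hslast hmono hnorm hfac
    have hsmonot : Monotone s := Fin.monotone_iff_le_succ.2 hmono
    have hcover : ∀ i : Fin n, ¬ (s i.succ ⊓ M ≤ s i.castSucc) →
        ((s i.succ : Set G) =
          (s i.castSucc : Set G) * ((M ⊓ s i.succ : Subgroup G) : Set G)) := by
      intro i hnav
      haveI := hnorm i.succ
      haveI := hnorm i.castSucc
      by_cases hc : s i.succ ≤ s i.castSucc ⊔ M
      · exact cover_of_le (hmono i) hc
      · obtain ⟨-, -, hav, -, -⟩ := dicho p hp M hM hdvd hps _ _ (hmono i) (hfac i) hc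
        exact absurd (by rw [inf_comm]; exact hav.le) hnav
    have hnotle : ∀ i : Fin n, ¬ s i.succ ≤ s i.castSucc := by
      intro i
      haveI := hnorm i.castSucc
      exact not_le_of_chief (hfac i)
    have havK : ∀ i : Fin n, (s i.succ ⊓ M ≤ s i.castSucc) → ¬ s i.succ ≤ M := by
      intro i hav hle
      exact hnotle i (fun x hx => hav ⟨hx, hle hx⟩)
    have havL : ∀ j : Fin n, (s j.succ ⊓ M ≤ s j.castSucc) → s j.castSucc ≤ M := by
      intro j hav
      by_contra h
      have htop : s j.castSucc ⊔ M = ⊤ := hM.2 _ (right_lt_sup.2 h)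
      have hcov : s j.succ ≤ s j.castSucc ⊔ M := htop ▸ le_top
      refine hnotle j ?_
      intro x hx
      haveI := hnorm j.castSucc
      have hx' : x ∈ ((s j.castSucc : Subgroup G) : Set G) *
          ((M ⊓ s j.succ : Subgroup G) : Set G) := by
        rw [← cover_of_le (hmono j) hcov]; exact hx
      obtain ⟨l, hl, m, hm, rfl⟩ := hx'
      exact (s j.castSucc).mul_mem hl (hav ⟨hm.2, hm.1⟩)
    have hex : ∃ i : Fin n, s i.succ ⊓ M ≤ s i.castSucc := by
      by_contra hno
      push_neg at hno
      have hall : ∀ j : Fin (n + 1), s j ≤ M := by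
        intro j
        induction j using Fin.induction with
        | zero => rw [hs0]; exact bot_le
        | succ j ih =>
          have hc := hcover j (hno j)
          have hle : s j.succ ≤ s j.castSucc ⊔ M := le_sup_of_cover hc
          exact hle.trans (sup_le ih le_rfl)
      have hlast := hall (Fin.last n)
      rw [hslast] at hlast
      exact hM.1 (top_unique hlast)
    obtain ⟨i0, hi0⟩ := hex
    have key : ∀ a b : Fin n, (s a.succ ⊓ M ≤ s a.castSucc) →
        (s b.succ ⊓ M ≤ s b.castSucc) → (a : ℕ) < (b : ℕ) → False := by
      intro a b hava havb hab
      have h1 : ¬ s a.succ ≤ M := havK a hava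
      have h2 : s b.castSucc ≤ M := havL b havb
      have h3 : s a.succ ≤ s b.castSucc := hsmonot (by
        rw [Fin.le_def]
        simp only [Fin.val_succ, Fin.coe_castSucc]
        omega)
      exact h1 (h3.trans h2)
    refine ⟨⟨i0, hi0, ?_⟩, hcover⟩
    intro j hj
    by_contra hne
    rcases Nat.lt_or_ge (j : ℕ) (i0 : ℕ) with h | h
    · exact key j i0 hj hi0 h
    · rcases Nat.eq_or_lt_of_le h with he | hl
      · exact hne (Fin.ext he.symm)
      · exact key i0 j hi0 hj hl
end

section
/- Let G be a finite group and suppose U = ⋂_{i=1}^n M_i is a complete intersection of maximal subgroups M₁,…,M_n of G. Then for any elements g₁,…,g_n ∈ G, the subgroup U₁ = ⋂_i M_i^{g_i} is conjugate to U in G. -/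
private lemma conj_mem_iff {G : Type*} [Group G] {M : Subgroup G} {g h : G}
    (hm : h⁻¹ * g ∈ M) (x : G) : g⁻¹ * x * g ∈ M ↔ h⁻¹ * x * h ∈ M := by
  constructor <;> intro hx
  · have := mul_mem (mul_mem hm hx) (inv_mem hm)
    simpa [mul_assoc] using this
  · have hm' : g⁻¹ * h ∈ M := by simpa using inv_mem hm
    have := mul_mem (mul_mem hm' hx) (inv_mem hm')
    simpa [mul_assoc] using this

/-- `U` is the complete intersection of the maximal subgroups `M i`:
`G` is `p`-solvable for each prime dividing `|G : U|`, `U = ⋂ᵢ Mᵢ` and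
`|G : U| = ∏ᵢ |G : Mᵢ|`. -/
def IsCompleteIntersectionOf {G : Type*} [Group G] {ι : Type*} [Fintype ι]
    (U : Subgroup G) (M : ι → Subgroup G) : Prop :=
  (∀ i, IsCoatom (M i)) ∧
  (∀ p : ℕ, p.Prime → p ∣ U.index → IsPSolvable p G) ∧
  U = ⨅ i, M i ∧
  U.index = ∏ i, (M i).index

theorem stmt11 {G : Type*} [Group G] [Finite G] {n : ℕ}
    (U : Subgroup G) (M : Fin n → Subgroup G)
    (hU : IsCompleteIntersectionOf U M) (g : Fin n → G) :
    ∃ h : G, (⨅ i, Subgroup.map (MulAut.conj (g i)).toMonoidHom (M i)) =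
      Subgroup.map (MulAut.conj h).toMonoidHom U := by
  obtain ⟨-, -, hUinf, hUidx⟩ := hU
  classical
  have hle : ∀ i, U ≤ M i := fun i => hUinf ▸ iInf_le M i
  let φ : G ⧸ U → ∀ i, G ⧸ M i := fun q =>
    Quotient.liftOn' q (fun x i => (x : G ⧸ M i)) (by
      intro a b hab
      rw [QuotientGroup.leftRel_apply] at hab
      funext i
      exact QuotientGroup.eq.2 (hle i hab))
  have hinj : Function.Injective φ := by
    intro a b
    induction a using Quotient.inductionOn' with | h a =>
    induction b using Quotient.inductionOn' with | h b =>
    intro hab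
    have hi : ∀ i, a⁻¹ * b ∈ M i := fun i => QuotientGroup.eq.1 (congrFun hab i)
    apply Quotient.sound'
    rw [QuotientGroup.leftRel_apply, hUinf]
    exact Subgroup.mem_iInf.2 hi
  have hcard : Nat.card (G ⧸ U) = Nat.card (∀ i, G ⧸ M i) := by
    rw [Nat.card_pi]
    exact hUidx
  have hbij : Function.Bijective φ :=
    (Nat.bijective_iff_injective_and_card φ).2 ⟨hinj, hcard⟩
  obtain ⟨q, hq⟩ := hbij.surjective (fun i => (g i : G ⧸ M i))
  induction q using Quotient.inductionOn' with | h h =>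
  have hm : ∀ i, h⁻¹ * g i ∈ M i := fun i =>
    QuotientGroup.eq.1 (congrFun hq i)
  refine ⟨h, ?_⟩
  ext x
  simp only [Subgroup.mem_iInf, Subgroup.mem_map_equiv, MulAut.conj_symm_apply, hUinf]
  refine forall_congr' fun i => ?_
  simpa [mul_assoc] using conj_mem_iff (hm i) x
end

section
/- Let G be a finite group and suppose U = ⋂_{i=1}^n M_i is a complete intersection of maximal subgroups M₁,…,M_n of G. Then for any subset I of {1,…,n}, U_I = ⋂_{i∈I} M_i is a complete intersection, and if I, J ⊆ {1,…,n} are disjoint then U_I · U_J = G. -/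
open scoped Pointwise

lemma mul_eq_univ_of_index_inf {G : Type*} [Group G] [Finite G] {A B : Subgroup G}
    (h : (A ⊓ B).index = A.index * B.index) :
    (A : Set G) * (B : Set G) = Set.univ := by
  have hA : A.index ≠ 0 := Subgroup.index_ne_zero_of_finite
  have hrel : B.relIndex A = B.index := by
    have h1 : (A ⊓ B).relIndex A * A.index = (A ⊓ B).index :=
      Subgroup.relIndex_mul_index inf_le_left
    rw [h, Subgroup.inf_relIndex_left] at h1
    exact Nat.eq_of_mul_eq_mul_right (Nat.pos_of_ne_zero hA)
      (by rw [h1, mul_comm])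
  let φ : A ⧸ (B.subgroupOf A) → G ⧸ B :=
    Quotient.map' (Subtype.val) (by
      intro a b hab
      rw [QuotientGroup.leftRel_apply] at hab ⊢
      exact (Subgroup.mem_subgroupOf).mp hab)
  have hinj : Function.Injective φ := by
    intro x y
    refine Quotient.inductionOn₂' x y ?_
    intro a b hab
    refine Quotient.sound' ?_
    rw [QuotientGroup.leftRel_apply]
    have : (↑a : G)⁻¹ * ↑b ∈ B := by
      have := Quotient.exact' hab
      rwa [QuotientGroup.leftRel_apply] at this
    exact Subgroup.mem_subgroupOf.mpr this
  have hcard : Nat.card (A ⧸ (B.subgroupOf A)) = Nat.card (G ⧸ B) := by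
    simpa [Subgroup.index, Subgroup.relIndex] using hrel
  have hsurj : Function.Surjective φ :=
    ((Nat.bijective_iff_injective_and_card φ).mpr ⟨hinj, hcard⟩).2
  ext g
  simp only [Set.mem_univ, iff_true]
  obtain ⟨x, hx⟩ := hsurj (QuotientGroup.mk g)
  refine Quotient.inductionOn' x (fun a ha => ?_) hx
  have : (↑a : G)⁻¹ * g ∈ B := by
    have := Quotient.exact' ha
    rwa [QuotientGroup.leftRel_apply] at this
  exact ⟨a, a.2, _, this, by group⟩

lemma iInf_finset_union {G : Type*} [Group G] {n : ℕ} (M : Fin n → Subgroup G)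
    (S T : Finset (Fin n)) :
    (⨅ i : {i // i ∈ S ∪ T}, M i) = (⨅ i : {i // i ∈ S}, M i) ⊓ (⨅ i : {i // i ∈ T}, M i) := by
  ext x
  simp only [Subgroup.mem_iInf, Subgroup.mem_inf, Subtype.forall, Finset.mem_union]
  constructor
  · intro h; exact ⟨fun i hi => h i (Or.inl hi), fun i hi => h i (Or.inr hi)⟩
  · rintro ⟨h1, h2⟩ i (hi | hi)
    exacts [h1 i hi, h2 i hi]

theorem stmt12 {G : Type*} [Group G] [Finite G] {n : ℕ}
    (U : Subgroup G) (M : Fin n → Subgroup G)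
    (hU : IsCompleteIntersectionOf U M) (I J : Finset (Fin n)) :
    IsCompleteIntersectionOf (⨅ i : {i // i ∈ I}, M i) (fun i : {i // i ∈ I} => M i) ∧
    (Disjoint I J →
      ((⨅ i : {i // i ∈ I}, M i : Subgroup G) : Set G) *
        ((⨅ i : {i // i ∈ J}, M i : Subgroup G) : Set G) = Set.univ) := by
  obtain ⟨hcoatom, hsolv, hUeq, hUidx⟩ := hU
  set K : Finset (Fin n) → Subgroup G := fun S => ⨅ i : {i // i ∈ S}, M i with hK
  have hle : ∀ S, (K S).index ≤ ∏ i ∈ S, (M i).index := by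
    intro S
    calc (K S).index ≤ ∏ i : {i // i ∈ S}, (M i).index := Subgroup.index_iInf_le _
    _ = ∏ i ∈ S, (M i).index := Finset.prod_coe_sort S (fun i => (M i).index)
  have hKuniv : K Finset.univ = U := by
    rw [hUeq]
    ext x
    simp [hK, Subgroup.mem_iInf, Subtype.forall]
  have hne : ∀ S, (K S).index ≠ 0 := fun S => Subgroup.index_ne_zero_of_finite
  have hfne : ∀ S : Finset (Fin n), (∏ i ∈ S, (M i).index) ≠ 0 := by
    intro S
    exact Finset.prod_ne_zero_iff.mpr fun i _ => Subgroup.index_ne_zero_of_finite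
  -- key: exact index of K S
  have hidx : ∀ S : Finset (Fin n), (K S).index = ∏ i ∈ S, (M i).index := by
    intro S
    have hSc : S ∪ Sᶜ = Finset.univ := by simp [Finset.union_compl]
    have h1 : U.index = (K S ⊓ K Sᶜ).index := by
      rw [← iInf_finset_union M S Sᶜ, ← hKuniv]
      exact congrArg (fun T => (K T).index) hSc.symm
    have h2 : (K S ⊓ K Sᶜ).index ≤ (K S).index * (K Sᶜ).index := Subgroup.index_inf_le
    have h3 : (∏ i ∈ S, (M i).index) * (∏ i ∈ Sᶜ, (M i).index) = U.index := by
      rw [hUidx, ← Finset.prod_union (disjoint_compl_right), hSc]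
    have h4 : (∏ i ∈ S, (M i).index) * (∏ i ∈ Sᶜ, (M i).index) ≤
        (K S).index * (K Sᶜ).index := by rw [h3, h1]; exact h2
    have h5 : (K S).index * (K Sᶜ).index ≤
        (∏ i ∈ S, (M i).index) * (∏ i ∈ Sᶜ, (M i).index) :=
      Nat.mul_le_mul (hle S) (hle Sᶜ)
    have heq : (K S).index * (K Sᶜ).index =
        (∏ i ∈ S, (M i).index) * (∏ i ∈ Sᶜ, (M i).index) := le_antisymm h5 h4
    -- from a ≤ c, b ≤ d, a*b = c*d with positivity conclude a = c
    by_contra hne'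
    have hlt : (K S).index < ∏ i ∈ S, (M i).index := lt_of_le_of_ne (hle S) hne'
    have : (K S).index * (K Sᶜ).index < (∏ i ∈ S, (M i).index) * (∏ i ∈ Sᶜ, (M i).index) :=
      Nat.mul_lt_mul_of_lt_of_le hlt (hle Sᶜ) (Nat.pos_of_ne_zero (hfne Sᶜ))
    omega
  have hUle : ∀ S, U ≤ K S := by
    intro S
    rw [hUeq]
    exact le_iInf fun i => iInf_le _ (i : Fin n)
  constructor
  · refine ⟨fun i => hcoatom i, fun p hp hpd => hsolv p hp ?_, rfl, ?_⟩
    · exact hpd.trans (Subgroup.index_dvd_of_le (hUle I))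
    · rw [show (⨅ i : {i // i ∈ I}, M i) = K I from rfl, hidx I]
      exact (Finset.prod_coe_sort I (fun i => (M i).index)).symm
  · intro hdisj
    apply mul_eq_univ_of_index_inf
    rw [show (⨅ i : {i // i ∈ I}, M i) = K I from rfl,
      show (⨅ i : {i // i ∈ J}, M i) = K J from rfl,
      ← iInf_finset_union M I J, show (⨅ i : {i // i ∈ I ∪ J}, M i) = K (I ∪ J) from rfl,
      hidx, hidx, hidx, Finset.prod_union hdisj]
end
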